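/- arXiv:2010.07271 — 7 statements merged into one kernel-verified Lean document; each statement's English description precedes it below -/
import Mathlib

section
/- If A is an m×d real matrix with ‖A‖_op = 1, η ∈ [0,1], and m < d, then the operator norm of I - 2ηA*A is exactly 1. -/
set_option maxHeartbeats 800000


open Matrix MeasureTheory ProbabilityTheory Filter
open scoped RealInnerProductSpace NNReal

/-- Operator norm of a matrix with respect to Euclidean norms. -/
noncomputable def opNorm {m d : ℕ} (A : Matrix (Fin m) (Fin d) ℝ) : ℝ :=
  ‖LinearMap.toContinuousLinearMap (Matrix.toEuclideanLin A)‖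

/-- Matrix-vector multiplication as a map between Euclidean spaces. -/
noncomputable def Mv {m d : ℕ} (A : Matrix (Fin m) (Fin d) ℝ)
    (x : EuclideanSpace ℝ (Fin d)) : EuclideanSpace ℝ (Fin m) :=
  Matrix.toEuclideanLin A x

/-- A vector is `s`-sparse if it has at most `s` nonzero entries. -/
def Sparse {d : ℕ} (s : ℕ) (x : EuclideanSpace ℝ (Fin d)) : Prop :=
  Set.ncard {i | x i ≠ 0} ≤ s

/-- Coordinate projection onto the index set `S`. -/
noncomputable def proj {d : ℕ} (S : Finset (Fin d)) (z : EuclideanSpace ℝ (Fin d)) :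
    EuclideanSpace ℝ (Fin d) :=
  WithLp.toLp 2 (fun i => if i ∈ S then z i else 0)

theorem stmt1 {m d : ℕ} (hmd : m < d) (A : Matrix (Fin m) (Fin d) ℝ) (hA : opNorm A = 1)
    (η : ℝ) (hη0 : 0 ≤ η) (hη1 : η ≤ 1) :
    opNorm ((1 : Matrix (Fin d) (Fin d) ℝ) - (2 * η) • (Aᵀ * A)) = 1 := by
  classical
  set L : EuclideanSpace ℝ (Fin d) →ₗ[ℝ] EuclideanSpace ℝ (Fin m) := Matrix.toEuclideanLin A
    with hLdef
  set L' : EuclideanSpace ℝ (Fin m) →ₗ[ℝ] EuclideanSpace ℝ (Fin d) := Matrix.toEuclideanLin Aᵀ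
    with hL'def
  have hS : L' = LinearMap.adjoint L := by
    rw [hL'def, hLdef, ← Matrix.toEuclideanLin_conjTranspose_eq_adjoint,
      Matrix.conjTranspose_eq_transpose_of_trivial]
  have hinner : ∀ (x : EuclideanSpace ℝ (Fin d)) (y : EuclideanSpace ℝ (Fin m)),
      ⟪x, L' y⟫ = ⟪L x, y⟫ := by
    intro x y; rw [hS, LinearMap.adjoint_inner_right]
  have hLnorm : ∀ x, ‖L x‖ ≤ ‖x‖ := by
    intro x
    have h := (LinearMap.toContinuousLinearMap (Matrix.toEuclideanLin A)).le_opNorm x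
    rw [show ‖LinearMap.toContinuousLinearMap (Matrix.toEuclideanLin A)‖ = 1 from hA] at h
    simpa using h
  have hL'norm : ∀ y, ‖L' y‖ ≤ ‖y‖ := by
    intro y
    have h1 : ⟪L' y, L' y⟫ = ⟪L (L' y), y⟫ := hinner (L' y) y
    have h2 : ⟪L (L' y), y⟫ ≤ ‖L (L' y)‖ * ‖y‖ := real_inner_le_norm _ _
    have h3 : ‖L (L' y)‖ ≤ ‖L' y‖ := hLnorm _
    have h4 : ‖L' y‖ ^ 2 = ⟪L' y, L' y⟫ := (real_inner_self_eq_norm_sq _).symm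
    nlinarith [norm_nonneg (L' y), norm_nonneg y]
  -- pointwise formula for the matrix in question
  have hmul : ∀ x : EuclideanSpace ℝ (Fin d),
      Matrix.toEuclideanLin (Aᵀ * A) x = L' (L x) := by
    intro x
    simp [hLdef, hL'def, Matrix.toEuclideanLin_eq_toLin,
      Matrix.toLin_mul (PiLp.basisFun 2 ℝ (Fin d)) (PiLp.basisFun 2 ℝ (Fin m))
        (PiLp.basisFun 2 ℝ (Fin d))]
  have hfx : ∀ x : EuclideanSpace ℝ (Fin d),
      Matrix.toEuclideanLin ((1 : Matrix (Fin d) (Fin d) ℝ) - (2 * η) • (Aᵀ * A)) x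
        = x - (2 * η) • L' (L x) := by
    intro x
    rw [map_sub, _root_.map_smul]
    simp only [LinearMap.sub_apply, LinearMap.smul_apply]
    rw [hmul]
    congr 1
    simp [Matrix.toEuclideanLin_eq_toLin, Matrix.toLin_one]
  -- upper bound pointwise
  have hub : ∀ x : EuclideanSpace ℝ (Fin d),
      ‖Matrix.toEuclideanLin ((1 : Matrix (Fin d) (Fin d) ℝ) - (2 * η) • (Aᵀ * A)) x‖ ≤ ‖x‖ := by
    intro x
    rw [hfx]
    have h1 : ‖x - (2 * η) • L' (L x)‖ ^ 2
        = ‖x‖ ^ 2 - 2 * ⟪x, (2 * η) • L' (L x)⟫ + ‖(2 * η) • L' (L x)‖ ^ 2 :=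
      norm_sub_sq_real x _
    have h2 : ⟪x, (2 * η) • L' (L x)⟫ = (2 * η) * ‖L x‖ ^ 2 := by
      rw [real_inner_smul_right, hinner, real_inner_self_eq_norm_sq]
    have h3 : ‖(2 * η) • L' (L x)‖ = (2 * η) * ‖L' (L x)‖ := by
      rw [norm_smul, Real.norm_eq_abs, abs_of_nonneg (by linarith : (0:ℝ) ≤ 2 * η)]
    have h4 : ‖L' (L x)‖ ≤ ‖L x‖ := hL'norm _
    have h5 : ‖x - (2 * η) • L' (L x)‖ ^ 2 ≤ ‖x‖ ^ 2 := by
      rw [h1, h2, h3]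
      have e1 : ‖L' (L x)‖ ^ 2 ≤ ‖L x‖ ^ 2 := by nlinarith [norm_nonneg (L' (L x))]
      have e2 : η ^ 2 * ‖L' (L x)‖ ^ 2 ≤ η ^ 2 * ‖L x‖ ^ 2 :=
        mul_le_mul_of_nonneg_left e1 (sq_nonneg η)
      have e3 : η ^ 2 * ‖L x‖ ^ 2 ≤ η * ‖L x‖ ^ 2 := by
        nlinarith [mul_nonneg (mul_nonneg hη0 (sub_nonneg.mpr hη1)) (sq_nonneg ‖L x‖)]
      nlinarith [e2, e3]
    have := Real.sqrt_le_sqrt h5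
    rwa [Real.sqrt_sq (norm_nonneg _), Real.sqrt_sq (norm_nonneg _)] at this
  -- there is a nonzero kernel vector
  have hker : LinearMap.ker L ≠ ⊥ := by
    intro hbot
    have h := LinearMap.finrank_range_add_finrank_ker L
    rw [hbot, finrank_bot, add_zero, finrank_euclideanSpace_fin] at h
    have : Module.finrank ℝ ↥(LinearMap.range L) ≤ m := by
      have := Submodule.finrank_le (LinearMap.range L)
      rwa [finrank_euclideanSpace_fin] at this
    omega
  obtain ⟨x, hxmem, hx0⟩ := (Submodule.ne_bot_iff _).mp hker
  have hLx : L x = 0 := hxmem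
  -- conclude
  apply le_antisymm
  · exact ContinuousLinearMap.opNorm_le_bound _ zero_le_one (fun x => by simpa using hub x)
  · have hfxx : Matrix.toEuclideanLin ((1 : Matrix (Fin d) (Fin d) ℝ) - (2 * η) • (Aᵀ * A)) x
        = x := by rw [hfx, hLx, map_zero, smul_zero, sub_zero]
    have h := (LinearMap.toContinuousLinearMap
      (Matrix.toEuclideanLin ((1 : Matrix (Fin d) (Fin d) ℝ) - (2 * η) • (Aᵀ * A)))).le_opNorm x
    rw [show (LinearMap.toContinuousLinearMap
      (Matrix.toEuclideanLin ((1 : Matrix (Fin d) (Fin d) ℝ) - (2 * η) • (Aᵀ * A)))) x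
      = Matrix.toEuclideanLin ((1 : Matrix (Fin d) (Fin d) ℝ) - (2 * η) • (Aᵀ * A)) x
      from rfl, hfxx] at h
    have hxpos : 0 < ‖x‖ := norm_pos_iff.mpr hx0
    unfold opNorm
    nlinarith [h]
end

section
/- Let A be an m×d real matrix with ‖A‖_op = 1 and restricted isometry constant δ_s, i.e., (1-δ_s)‖x‖² ≤ ‖Ax‖² ≤ (1+δ_s)‖x‖² for all s-sparse x. Then for every s-sparse vector x ∈ ℝ^d, ‖(I - A*A)x‖₂ ≤ √δ_s · ‖x‖₂. -/
open Matrix MeasureTheory ProbabilityTheory Filter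
open scoped RealInnerProductSpace NNReal

lemma Mv_inner {m d : ℕ} (A : Matrix (Fin m) (Fin d) ℝ)
    (z w : EuclideanSpace ℝ (Fin d)) :
    ⟪Mv ((1 : Matrix (Fin d) (Fin d) ℝ) - Aᵀ * A) z, w⟫ = ⟪z, w⟫ - ⟪Mv A z, Mv A w⟫ := by
  have h1 : Mv ((1 : Matrix (Fin d) (Fin d) ℝ) - Aᵀ * A) z
      = z - Matrix.toEuclideanLin Aᵀ (Mv A z) := by
    have e1 : Matrix.toEuclideanLin (1 : Matrix (Fin d) (Fin d) ℝ) z = z := by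
      simp [Matrix.toEuclideanLin_apply, Matrix.one_mulVec]
    have e2 : Matrix.toEuclideanLin (Aᵀ * A) z = Matrix.toEuclideanLin Aᵀ (Mv A z) := by
      simp [Mv, Matrix.toEuclideanLin_apply, Matrix.mulVec_mulVec]
    simp only [Mv, map_sub, LinearMap.sub_apply, e1, e2]
  rw [h1, inner_sub_left]
  congr 1
  have : (Aᵀ : Matrix (Fin d) (Fin m) ℝ) = Aᴴ := by
    simp [Matrix.conjTranspose, Matrix.transpose_map]
    rfl
  rw [this, Matrix.toEuclideanLin_conjTranspose_eq_adjoint, LinearMap.adjoint_inner_left]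
  rfl

theorem stmt2 {m d s : ℕ} (A : Matrix (Fin m) (Fin d) ℝ) (hA : opNorm A = 1)
    (δ : ℝ) (hδ0 : 0 ≤ δ)
    (hRIP : ∀ x : EuclideanSpace ℝ (Fin d), Sparse s x →
      (1 - δ) * ‖x‖ ^ 2 ≤ ‖Mv A x‖ ^ 2 ∧ ‖Mv A x‖ ^ 2 ≤ (1 + δ) * ‖x‖ ^ 2)
    (x : EuclideanSpace ℝ (Fin d)) (hx : Sparse s x) :
    ‖Mv ((1 : Matrix (Fin d) (Fin d) ℝ) - Aᵀ * A) x‖ ≤ Real.sqrt δ * ‖x‖ := by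
  set B : EuclideanSpace ℝ (Fin d) → EuclideanSpace ℝ (Fin d) :=
    Mv ((1 : Matrix (Fin d) (Fin d) ℝ) - Aᵀ * A) with hB
  -- ‖A z‖ ≤ ‖z‖
  have hAle : ∀ z : EuclideanSpace ℝ (Fin d), ‖Mv A z‖ ≤ ‖z‖ := by
    intro z
    have := (LinearMap.toContinuousLinearMap (Matrix.toEuclideanLin A)).le_opNorm z
    rw [show ‖LinearMap.toContinuousLinearMap (Matrix.toEuclideanLin A)‖ = 1 from hA] at this
    simpa [Mv] using this
  -- B is PSD
  have hpos : ∀ z : EuclideanSpace ℝ (Fin d), 0 ≤ ⟪B z, z⟫ := by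
    intro z
    rw [hB, Mv_inner]
    have := hAle z
    nlinarith [real_inner_self_eq_norm_sq z, real_inner_self_eq_norm_sq (Mv A z),
      norm_nonneg (Mv A z), norm_nonneg z]
  -- B ≤ 1
  have hle : ∀ z : EuclideanSpace ℝ (Fin d), ⟪B z, z⟫ ≤ ‖z‖ ^ 2 := by
    intro z
    rw [hB, Mv_inner]
    nlinarith [real_inner_self_eq_norm_sq z, real_inner_self_eq_norm_sq (Mv A z),
      norm_nonneg (Mv A z)]
  -- key RIP bound
  have hkey : ⟪B x, x⟫ ≤ δ * ‖x‖ ^ 2 := by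
    rw [hB, Mv_inner]
    have := (hRIP x hx).1
    nlinarith [real_inner_self_eq_norm_sq x, real_inner_self_eq_norm_sq (Mv A x)]
  -- B is linear (for Cauchy–Schwarz expansion)
  have hBadd : ∀ z w : EuclideanSpace ℝ (Fin d), B (z + w) = B z + B w := by
    intro z w; simp [hB, Mv, map_add]
  have hBsmul : ∀ (t : ℝ) (z : EuclideanSpace ℝ (Fin d)), B (t • z) = t • B z := by
    intro t z; simp [hB, Mv, LinearMap.map_smul]
  -- symmetry
  have hsymm : ∀ z w : EuclideanSpace ℝ (Fin d), ⟪B z, w⟫ = ⟪z, B w⟫ := by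
    intro z w
    rw [hB, Mv_inner,
      show ⟪z, Mv ((1 : Matrix (Fin d) (Fin d) ℝ) - Aᵀ * A) w⟫
        = ⟪Mv ((1 : Matrix (Fin d) (Fin d) ℝ) - Aᵀ * A) w, z⟫ from real_inner_comm _ _,
      Mv_inner, real_inner_comm z w, real_inner_comm (Mv A z) (Mv A w)]
  -- Cauchy–Schwarz for the form B
  have hCS : ∀ z w : EuclideanSpace ℝ (Fin d), ⟪B z, w⟫ ^ 2 ≤ ⟪B z, z⟫ * ⟪B w, w⟫ := by
    intro z w
    have hquad : ∀ t : ℝ,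
        0 ≤ ⟪B w, w⟫ * (t * t) + (2 * ⟪B z, w⟫) * t + ⟪B z, z⟫ := by
      intro t
      have := hpos (z + t • w)
      rw [hBadd, hBsmul] at this
      simp only [inner_add_left, inner_add_right, real_inner_smul_left,
        real_inner_smul_right] at this
      have hsw : ⟪w, B z⟫ = ⟪B z, w⟫ := real_inner_comm _ _
      have hsw3 : ⟪z, B w⟫ = ⟪B z, w⟫ := (hsymm z w).symm
      have hsw2 : ⟪B w, z⟫ = ⟪B z, w⟫ := by rw [hsymm w z]; exact real_inner_comm _ _
      rw [hsw2] at this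
      nlinarith [this]
    have hd := discrim_le_zero hquad
    rw [discrim] at hd
    nlinarith [hd]
  -- finish
  have hmain : ‖B x‖ ^ 2 ≤ δ * ‖x‖ ^ 2 := by
    rcases eq_or_ne (B x) 0 with h0 | h0
    · rw [h0]
      have : (0:ℝ) ≤ δ * ‖x‖ ^ 2 := mul_nonneg hδ0 (sq_nonneg _)
      simpa using this
    · have h1 : ⟪B x, B x⟫ ^ 2 ≤ ⟪B x, x⟫ * ⟪B (B x), B x⟫ := hCS x (B x)
      have h2 : ⟪B (B x), B x⟫ ≤ ‖B x‖ ^ 2 := hle (B x)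
      have h3 : ⟪B x, B x⟫ = ‖B x‖ ^ 2 := real_inner_self_eq_norm_sq _
      have h4 : 0 < ‖B x‖ ^ 2 := pow_pos (norm_pos_iff.mpr h0) 2
      have h5 : 0 ≤ ⟪B x, x⟫ := hpos x
      nlinarith [hkey]
  calc ‖B x‖ = Real.sqrt (‖B x‖ ^ 2) := by rw [Real.sqrt_sq (norm_nonneg _)]
    _ ≤ Real.sqrt (δ * ‖x‖ ^ 2) := Real.sqrt_le_sqrt hmain
    _ = Real.sqrt δ * ‖x‖ := by
        rw [Real.sqrt_mul hδ0, Real.sqrt_sq (norm_nonneg _)]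
end

section
/- Let z, x* ∈ ℝ^d with x* s-sparse, let A be an m×d matrix, let C(x) = ‖A(x* − x)‖₂², and let ℓ = z − η∇C(z) for some η > 0. If H(z) denotes the s-sparse coordinate projection of z that is closest in Euclidean norm to ℓ among all s-sparse coordinate projections of z, then ‖H(z) − x*‖₂ ≤ √(‖z − ℓ‖₂² + ‖ℓ − x*‖₂²) + ‖ℓ − x*‖₂. -/
open Matrix MeasureTheory ProbabilityTheory Filter
open scoped RealInnerProductSpace NNReal

theorem stmt6 {m d s : ℕ} (z xs : EuclideanSpace ℝ (Fin d)) (hxs : Sparse s xs)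
    (A : Matrix (Fin m) (Fin d) ℝ) (η : ℝ) (hη : 0 < η)
    (ℓ : EuclideanSpace ℝ (Fin d))
    (hℓ : ℓ = z - η • ((2 : ℝ) • Mv Aᵀ (Mv A z - Mv A xs)))
    (Ω : Finset (Fin d)) (hΩ : Ω.card = s)
    (Hz : EuclideanSpace ℝ (Fin d)) (hHz : Hz = proj Ω z)
    (hmin : ∀ Ω' : Finset (Fin d), Ω'.card = s → ‖Hz - ℓ‖ ≤ ‖proj Ω' z - ℓ‖) :
    ‖Hz - xs‖ ≤ Real.sqrt (‖z - ℓ‖ ^ 2 + ‖ℓ - xs‖ ^ 2) + ‖ℓ - xs‖ := by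
  have hsd : s ≤ d := by
    have := Finset.card_le_univ Ω
    simpa [hΩ] using this
  set T := Finset.univ.filter (fun i => xs i ≠ 0) with hT
  have hTcard : T.card ≤ s := by
    have hn : {i | xs i ≠ 0}.ncard = T.card := by
      rw [← Set.ncard_coe_finset]
      congr 1
      ext i; simp [hT]
    unfold Sparse at hxs; rw [hn] at hxs; exact hxs
  obtain ⟨Ω', hsub, hcard⟩ := Finset.exists_superset_card_eq hTcard (by simpa using hsd)
  have norm_sq : ∀ v : EuclideanSpace ℝ (Fin d), ‖v‖ ^ 2 = ∑ i, v i ^ 2 := by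
    intro v
    rw [EuclideanSpace.norm_eq, Real.sq_sqrt (by positivity)]
    simp [sq_abs]
  have key : ‖proj Ω' z - ℓ‖ ^ 2 ≤ ‖z - ℓ‖ ^ 2 + ‖ℓ - xs‖ ^ 2 := by
    rw [norm_sq, norm_sq, norm_sq, ← Finset.sum_add_distrib]
    apply Finset.sum_le_sum
    intro i _
    by_cases hi : i ∈ Ω'
    · have : (proj Ω' z - ℓ) i = (z - ℓ) i := by simp [proj, hi]
      rw [this]
      nlinarith [sq_nonneg ((ℓ - xs) i)]
    · have hx : xs i = 0 := by
        by_contra hxi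
        exact hi (hsub (by simp [hT, hxi]))
      have h1 : (proj Ω' z - ℓ) i = -(ℓ i) := by simp [proj, hi]
      have h2 : (ℓ - xs) i = ℓ i := by simp [hx]
      rw [h1, h2]
      nlinarith [sq_nonneg ((z - ℓ) i)]
  have h2 : ‖Hz - ℓ‖ ≤ Real.sqrt (‖z - ℓ‖ ^ 2 + ‖ℓ - xs‖ ^ 2) := by
    calc ‖Hz - ℓ‖ ≤ ‖proj Ω' z - ℓ‖ := hmin Ω' hcard
      _ = Real.sqrt (‖proj Ω' z - ℓ‖ ^ 2) := (Real.sqrt_sq (norm_nonneg _)).symm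
      _ ≤ Real.sqrt (‖z - ℓ‖ ^ 2 + ‖ℓ - xs‖ ^ 2) := Real.sqrt_le_sqrt key
  calc ‖Hz - xs‖ = ‖(Hz - ℓ) + (ℓ - xs)‖ := by rw [sub_add_sub_cancel]
    _ ≤ ‖Hz - ℓ‖ + ‖ℓ - xs‖ := norm_add_le _ _
    _ ≤ Real.sqrt (‖z - ℓ‖ ^ 2 + ‖ℓ - xs‖ ^ 2) + ‖ℓ - xs‖ := by linarith
end

section
/- Let A be an m×d matrix with ‖A‖_op = 1, x* ∈ ℝ^d s-sparse, y = Ax*, and 0 ≤ η ≤ 1. Let a ∈ ℝ^d be arbitrary, C(x) = ‖y − Ax‖₂², ℓ_η = a − η∇C(a), and let x' be the s-sparse coordinate projection of a closest to ℓ_η. Then ‖x* − x'‖₂ ≤ (1 + √(1 + 4η²)) ‖x* − a‖₂. -/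
open Matrix MeasureTheory ProbabilityTheory Filter
open scoped RealInnerProductSpace NNReal

lemma Mv_norm_le {m d : ℕ} (A : Matrix (Fin m) (Fin d) ℝ) (hA : opNorm A = 1)
    (x : EuclideanSpace ℝ (Fin d)) : ‖Mv A x‖ ≤ ‖x‖ := by
  have h := (LinearMap.toContinuousLinearMap (Matrix.toEuclideanLin A)).le_opNorm x
  rw [show ‖LinearMap.toContinuousLinearMap (Matrix.toEuclideanLin A)‖ = opNorm A from rfl,
    hA, one_mul] at h
  exact h

lemma Mv_adjoint {m d : ℕ} (A : Matrix (Fin m) (Fin d) ℝ)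
    (u : EuclideanSpace ℝ (Fin m)) (w : EuclideanSpace ℝ (Fin d)) :
    ⟪Mv Aᵀ u, w⟫ = ⟪u, Mv A w⟫ := by
  have h : Aᵀ = Aᴴ := (Matrix.conjTranspose_eq_transpose_of_trivial A).symm
  rw [Mv, Mv, h, Matrix.toEuclideanLin_conjTranspose_eq_adjoint,
    LinearMap.adjoint_inner_left]

lemma Mv_transpose_norm_le {m d : ℕ} (A : Matrix (Fin m) (Fin d) ℝ) (hA : opNorm A = 1)
    (u : EuclideanSpace ℝ (Fin m)) : ‖Mv Aᵀ u‖ ≤ ‖u‖ := by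
  have h1 : ‖Mv Aᵀ u‖ ^ 2 = ⟪u, Mv A (Mv Aᵀ u)⟫ := by
    rw [← Mv_adjoint, real_inner_self_eq_norm_sq]
  have h2 : ⟪u, Mv A (Mv Aᵀ u)⟫ ≤ ‖u‖ * ‖Mv A (Mv Aᵀ u)‖ := real_inner_le_norm _ _
  have h3 : ‖Mv A (Mv Aᵀ u)‖ ≤ ‖Mv Aᵀ u‖ := Mv_norm_le A hA _
  nlinarith [norm_nonneg (Mv Aᵀ u), norm_nonneg u]

lemma sqnorm {n : ℕ} (x : EuclideanSpace ℝ (Fin n)) : ‖x‖ ^ 2 = ∑ i, (x i) ^ 2 := by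
  exact EuclideanSpace.real_norm_sq_eq x

set_option maxHeartbeats 1000000 in
theorem stmt7 {m d s : ℕ} (A : Matrix (Fin m) (Fin d) ℝ) (hA : opNorm A = 1)
    (xs : EuclideanSpace ℝ (Fin d)) (hxs : Sparse s xs)
    (y : EuclideanSpace ℝ (Fin m)) (hy : y = Mv A xs)
    (η : ℝ) (hη0 : 0 ≤ η) (hη1 : η ≤ 1)
    (a : EuclideanSpace ℝ (Fin d)) (ℓ : EuclideanSpace ℝ (Fin d))
    (hℓ : ℓ = a - η • ((-2 : ℝ) • Mv Aᵀ (y - Mv A a)))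
    (Ω : Finset (Fin d)) (hΩ : Ω.card = s)
    (x' : EuclideanSpace ℝ (Fin d)) (hx' : x' = proj Ω a)
    (hmin : ∀ Ω' : Finset (Fin d), Ω'.card = s → ‖x' - ℓ‖ ≤ ‖proj Ω' a - ℓ‖) :
    ‖xs - x'‖ ≤ (1 + Real.sqrt (1 + 4 * η ^ 2)) * ‖xs - a‖ := by
  classical
  set v : EuclideanSpace ℝ (Fin d) := xs - a with hv
  set g : EuclideanSpace ℝ (Fin d) := (2 * η) • Mv Aᵀ (Mv A v) with hg
  -- rewrite ℓ = a + g
  have hMvA : Mv A xs - Mv A a = Mv A v := by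
    rw [hv, Mv, Mv, Mv, map_sub]
  have hℓ' : ℓ = a + g := by
    rw [hℓ, hy, hMvA, hg]
    rw [smul_smul]
    have : η * (-2 : ℝ) = -(2 * η) := by ring
    rw [this, neg_smul, sub_neg_eq_add]
  -- support set
  have hsupp : {i | xs i ≠ 0}.toFinset.card ≤ s := by
    rw [← Set.ncard_eq_toFinset_card'] ; exact hxs
  have hsd : s ≤ (Finset.univ : Finset (Fin d)).card := hΩ ▸ Finset.card_le_univ Ω
  obtain ⟨S, hSsub, -, hScard⟩ :=
    Finset.exists_subsuperset_card_eq (Finset.subset_univ {i | xs i ≠ 0}.toFinset) hsupp hsd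
  have hxsS : ∀ i, i ∉ S → xs i = 0 := by
    intro i hi
    by_contra hne
    exact hi (hSsub (by simpa using hne))
  -- norm bounds
  have hgnorm : ‖g‖ ≤ 2 * η * ‖v‖ := by
    rw [hg, norm_smul]
    have h1 : ‖Mv Aᵀ (Mv A v)‖ ≤ ‖v‖ :=
      le_trans (Mv_transpose_norm_le A hA _) (Mv_norm_le A hA v)
    have h2 : ‖(2 * η : ℝ)‖ = 2 * η := by
      rw [Real.norm_eq_abs, abs_of_nonneg (by linarith)]
    rw [h2]
    have : (0:ℝ) ≤ 2 * η := by linarith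
    exact mul_le_mul_of_nonneg_left h1 this
  have hvg : ‖v - g‖ ≤ ‖v‖ := by
    have hinner : ⟪v, g⟫ = 2 * η * ‖Mv A v‖ ^ 2 := by
      rw [hg, real_inner_smul_right, real_inner_comm, Mv_adjoint,
        real_inner_self_eq_norm_sq]
    have hg2 : ‖g‖ ^ 2 ≤ 4 * η ^ 2 * ‖Mv A v‖ ^ 2 := by
      rw [hg, norm_smul]
      have h1 : ‖Mv Aᵀ (Mv A v)‖ ≤ ‖Mv A v‖ := Mv_transpose_norm_le A hA _
      have h2 : ‖(2 * η : ℝ)‖ = 2 * η := by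
        rw [Real.norm_eq_abs, abs_of_nonneg (by linarith)]
      rw [h2, mul_pow]
      have h4 : ‖Mv Aᵀ (Mv A v)‖ ^ 2 ≤ ‖Mv A v‖ ^ 2 :=
        pow_le_pow_left₀ (norm_nonneg _) h1 2
      calc (2 * η) ^ 2 * ‖Mv Aᵀ (Mv A v)‖ ^ 2 ≤ (2 * η) ^ 2 * ‖Mv A v‖ ^ 2 := by
            exact mul_le_mul_of_nonneg_left h4 (sq_nonneg _)
        _ = 4 * η ^ 2 * ‖Mv A v‖ ^ 2 := by ring
    have hη2 : η ^ 2 ≤ η := by nlinarith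
    have hsq : ‖v - g‖ ^ 2 ≤ ‖v‖ ^ 2 := by
      rw [norm_sub_sq_real, hinner]
      nlinarith [sq_nonneg ‖Mv A v‖, mul_nonneg (sub_nonneg.mpr hη2) (sq_nonneg ‖Mv A v‖)]
    nlinarith [norm_nonneg (v - g), norm_nonneg v]
  -- the orthogonal split bound
  have hkey : ‖ℓ - proj S a‖ ^ 2 ≤ ‖g‖ ^ 2 + ‖g - v‖ ^ 2 := by
    have hpt : ∀ i, (ℓ - proj S a) i = if i ∈ S then g i else (g - v) i := by
      intro i
      have hℓi : ℓ i = a i + g i := by rw [hℓ']; rfl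
      have h1 : (ℓ - proj S a) i = ℓ i - proj S a i := rfl
      rw [h1, hℓi]
      by_cases hi : i ∈ S
      · rw [if_pos hi]
        show a i + g i - proj S a i = g i
        rw [show proj S a i = a i by simp [proj, hi]]
        ring
      · have hxi : xs i = 0 := hxsS i hi
        rw [if_neg hi]
        show a i + g i - proj S a i = (g - v) i
        rw [show proj S a i = (0:ℝ) by simp [proj, hi]]
        have hgv : (g - v) i = g i - v i := rfl
        have hvi : v i = xs i - a i := rfl
        rw [hgv, hvi, hxi]
        ring
    rw [sqnorm, sqnorm, sqnorm]
    rw [← Finset.sum_add_sum_compl S (fun i => ((ℓ - proj S a) i) ^ 2)]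
    have hS1 : ∑ i ∈ S, ((ℓ - proj S a) i) ^ 2 ≤ ∑ i, (g i) ^ 2 := by
      have : ∑ i ∈ S, ((ℓ - proj S a) i) ^ 2 = ∑ i ∈ S, (g i) ^ 2 := by
        refine Finset.sum_congr rfl fun i hi => ?_
        rw [hpt i, if_pos hi]
      rw [this]
      exact Finset.sum_le_sum_of_subset_of_nonneg (Finset.subset_univ S)
        (fun i _ _ => sq_nonneg _)
    have hS2 : ∑ i ∈ Sᶜ, ((ℓ - proj S a) i) ^ 2 ≤ ∑ i, ((g - v) i) ^ 2 := by
      have : ∑ i ∈ Sᶜ, ((ℓ - proj S a) i) ^ 2 = ∑ i ∈ Sᶜ, ((g - v) i) ^ 2 := by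
        refine Finset.sum_congr rfl fun i hi => ?_
        rw [hpt i, if_neg (Finset.mem_compl.mp hi)]
      rw [this]
      exact Finset.sum_le_sum_of_subset_of_nonneg (Finset.subset_univ Sᶜ)
        (fun i _ _ => sq_nonneg _)
    linarith
  -- assemble
  have hgv' : ‖g - v‖ ≤ ‖v‖ := by rw [norm_sub_rev]; exact hvg
  have hkey2 : ‖ℓ - proj S a‖ ≤ Real.sqrt (1 + 4 * η ^ 2) * ‖v‖ := by
    have h14 : (0:ℝ) ≤ 1 + 4 * η ^ 2 := by positivity
    have hsq : (Real.sqrt (1 + 4 * η ^ 2)) ^ 2 = 1 + 4 * η ^ 2 := Real.sq_sqrt h14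
    have hb : ‖ℓ - proj S a‖ ^ 2 ≤ (1 + 4 * η ^ 2) * ‖v‖ ^ 2 := by
      have : ‖g‖ ^ 2 ≤ 4 * η ^ 2 * ‖v‖ ^ 2 := by
        nlinarith [norm_nonneg g, norm_nonneg v]
      nlinarith [norm_nonneg (g - v)]
    nlinarith [norm_nonneg (ℓ - proj S a), Real.sqrt_nonneg (1 + 4 * η ^ 2),
      norm_nonneg v, mul_nonneg (Real.sqrt_nonneg (1 + 4 * η ^ 2)) (norm_nonneg v)]
  have htri : ‖xs - x'‖ ≤ ‖xs - ℓ‖ + ‖ℓ - x'‖ := by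
    have := dist_triangle xs ℓ x'
    simpa [dist_eq_norm] using this
  have hxl : ‖xs - ℓ‖ ≤ ‖v‖ := by
    have : xs - ℓ = v - g := by rw [hℓ', hv]; abel
    rw [this]; exact hvg
  have hlx : ‖ℓ - x'‖ ≤ Real.sqrt (1 + 4 * η ^ 2) * ‖v‖ := by
    have h1 : ‖ℓ - x'‖ = ‖x' - ℓ‖ := norm_sub_rev _ _
    have h2 : ‖x' - ℓ‖ ≤ ‖proj S a - ℓ‖ := hmin S hScard
    have h3 : ‖proj S a - ℓ‖ = ‖ℓ - proj S a‖ := norm_sub_rev _ _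
    rw [h1]
    exact le_trans h2 (h3 ▸ hkey2)
  have hva : ‖v‖ = ‖xs - a‖ := by rw [hv]
  calc ‖xs - x'‖ ≤ ‖xs - ℓ‖ + ‖ℓ - x'‖ := htri
    _ ≤ ‖v‖ + Real.sqrt (1 + 4 * η ^ 2) * ‖v‖ := add_le_add hxl hlx
    _ = (1 + Real.sqrt (1 + 4 * η ^ 2)) * ‖xs - a‖ := by rw [hva]; ring
end

section
/- Let A be an m×d matrix with ‖A‖_op = 1 and restricted isometry constant δ_{2s} < 1/(1+√(1+4η²))² for some η ∈ [0,1]. Let x* be s-sparse, y = Ax*, and define the ILAT iteration: a^t = x^{t-1} + A*(y − Ax^{t-1}), and x^t is the s-sparse coordinate projection of a^t closest to the look-ahead point a^t − η∇C(a^t), where C(x) = ‖y − Ax‖₂². Then ‖x^t − x*‖₂ ≤ ρ^t ‖x^0 − x*‖₂ with ρ = √δ_{2s}(1+√(1+4η²)) < 1; in particular x^t → x*. -/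
open Matrix MeasureTheory ProbabilityTheory Filter
open scoped RealInnerProductSpace NNReal

lemma Mv_adj {m d : ℕ} (A : Matrix (Fin m) (Fin d) ℝ) (w : EuclideanSpace ℝ (Fin m))
    (v : EuclideanSpace ℝ (Fin d)) : ⟪Mv Aᵀ w, v⟫ = ⟪w, Mv A v⟫ := by
  have h : Aᵀ = Aᴴ := by ext i j; simp [Matrix.conjTranspose]
  rw [Mv, Mv, h, Matrix.toEuclideanLin_conjTranspose_eq_adjoint,
    LinearMap.adjoint_inner_left]

lemma proj_norm_le {d : ℕ} (S : Finset (Fin d)) (z : EuclideanSpace ℝ (Fin d)) :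
    ‖proj S z‖ ≤ ‖z‖ := by
  rw [EuclideanSpace.norm_eq, EuclideanSpace.norm_eq]
  apply Real.sqrt_le_sqrt
  apply Finset.sum_le_sum
  intro i _
  by_cases h : i ∈ S
  · simp [proj, h]
  · simp [proj, h]; positivity

lemma pyth {d : ℕ} (v₁ v₂ : EuclideanSpace ℝ (Fin d)) (h : ∀ i, v₁ i * v₂ i = 0) :
    ‖v₁ + v₂‖ ^ 2 = ‖v₁‖ ^ 2 + ‖v₂‖ ^ 2 := by
  have hinner : ⟪v₁, v₂⟫ = 0 := by
    rw [PiLp.inner_apply]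
    simp only [RCLike.inner_apply, starRingEnd_apply, star_trivial]
    exact Finset.sum_eq_zero fun i _ => by rw [mul_comm]; exact h i
  have := norm_add_sq_real v₁ v₂
  rw [hinner] at this
  linarith

lemma sparse_sub {d s : ℕ} {u v : EuclideanSpace ℝ (Fin d)}
    (hu : Sparse s u) (hv : Sparse s v) : Sparse (2 * s) (u - v) := by
  simp only [Sparse] at hu hv ⊢
  have hsub : {i | (u - v) i ≠ 0} ⊆ {i | u i ≠ 0} ∪ {i | v i ≠ 0} := by
    intro i hi
    by_contra hc
    simp only [Set.mem_union, Set.mem_setOf_eq, not_or, not_not] at hc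
    have : (u - v) i = u i - v i := rfl
    exact hi (by simp [Set.mem_setOf_eq, this, hc.1, hc.2])
  have h1 : Set.ncard {i | (u - v) i ≠ 0} ≤
      Set.ncard ({i | u i ≠ 0} ∪ {i | v i ≠ 0}) :=
    Set.ncard_le_ncard hsub (Set.toFinite _)
  have h2 := Set.ncard_union_le {i | u i ≠ 0} {i | v i ≠ 0}
  omega

set_option maxHeartbeats 2000000 in
theorem stmt8 {m d s : ℕ} (A : Matrix (Fin m) (Fin d) ℝ) (hA : opNorm A = 1)
    (η : ℝ) (hη0 : 0 ≤ η) (hη1 : η ≤ 1)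
    (δ : ℝ) (hδ0 : 0 ≤ δ)
    (hRIP : ∀ v : EuclideanSpace ℝ (Fin d), Sparse (2 * s) v →
      (1 - δ) * ‖v‖ ^ 2 ≤ ‖Mv A v‖ ^ 2 ∧ ‖Mv A v‖ ^ 2 ≤ (1 + δ) * ‖v‖ ^ 2)
    (hδ : δ < 1 / (1 + Real.sqrt (1 + 4 * η ^ 2)) ^ 2)
    (xs : EuclideanSpace ℝ (Fin d)) (hxs : Sparse s xs)
    (y : EuclideanSpace ℝ (Fin m)) (hy : y = Mv A xs)
    (x a : ℕ → EuclideanSpace ℝ (Fin d)) (hx0 : x 0 = 0)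
    (ha : ∀ t : ℕ, a (t + 1) = x t + Mv Aᵀ (y - Mv A (x t)))
    (hstep : ∀ t : ℕ, ∃ Ω : Finset (Fin d), Ω.card = s ∧ x (t + 1) = proj Ω (a (t + 1)) ∧
      ∀ Ω' : Finset (Fin d), Ω'.card = s →
        ‖x (t + 1) - (a (t + 1) - η • ((-2 : ℝ) • Mv Aᵀ (y - Mv A (a (t + 1)))))‖ ≤
        ‖proj Ω' (a (t + 1)) - (a (t + 1) - η • ((-2 : ℝ) • Mv Aᵀ (y - Mv A (a (t + 1)))))‖) :
    Real.sqrt δ * (1 + Real.sqrt (1 + 4 * η ^ 2)) < 1 ∧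
    (∀ t : ℕ, ‖x t - xs‖ ≤
      (Real.sqrt δ * (1 + Real.sqrt (1 + 4 * η ^ 2))) ^ t * ‖x 0 - xs‖) ∧
    Tendsto x atTop (nhds xs) := by
  set K : ℝ := 1 + Real.sqrt (1 + 4 * η ^ 2) with hK
  set ρ : ℝ := Real.sqrt δ * K with hρ
  have hsq1 : (1 : ℝ) ≤ Real.sqrt (1 + 4 * η ^ 2) := by
    have h := Real.sqrt_le_sqrt (show (1:ℝ) ≤ 1 + 4 * η ^ 2 by nlinarith [sq_nonneg η])
    simpa using h
  have hKpos : 0 < K := by rw [hK]; linarith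
  have hρ0 : 0 ≤ ρ := mul_nonneg (Real.sqrt_nonneg _) hKpos.le
  -- ρ < 1
  have hρ1 : ρ < 1 := by
    have h2 : Real.sqrt (1 / K ^ 2) = 1 / K := by
      rw [one_div, one_div, Real.sqrt_inv, Real.sqrt_sq hKpos.le]
    have h1 : Real.sqrt δ < 1 / K := by
      have := Real.sqrt_lt_sqrt hδ0 hδ
      rwa [h2] at this
    calc ρ = Real.sqrt δ * K := rfl
      _ < (1 / K) * K := mul_lt_mul_of_pos_right h1 hKpos
      _ = 1 := by field_simp
  -- norm bounds from opNorm
  have hAle : ∀ v : EuclideanSpace ℝ (Fin d), ‖Mv A v‖ ≤ ‖v‖ := by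
    intro v
    have h0 := (LinearMap.toContinuousLinearMap (Matrix.toEuclideanLin A)).le_opNorm v
    have hA' : ‖LinearMap.toContinuousLinearMap (Matrix.toEuclideanLin A)‖ = 1 := hA
    rw [hA', one_mul] at h0
    simpa [Mv] using h0
  have hATle : ∀ w : EuclideanSpace ℝ (Fin m), ‖Mv Aᵀ w‖ ≤ ‖w‖ := by
    intro w
    have h1 : ‖Mv Aᵀ w‖ ^ 2 = ⟪w, Mv A (Mv Aᵀ w)⟫ := by
      rw [← Mv_adj]
      exact (real_inner_self_eq_norm_sq _).symm
    have h2 : ⟪w, Mv A (Mv Aᵀ w)⟫ ≤ ‖w‖ * ‖Mv A (Mv Aᵀ w)‖ := real_inner_le_norm _ _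
    have h3 : ‖Mv A (Mv Aᵀ w)‖ ≤ ‖Mv Aᵀ w‖ := hAle _
    nlinarith [norm_nonneg (Mv Aᵀ w), norm_nonneg w]
  -- key contraction lemma
  have hKeySp : ∀ v : EuclideanSpace ℝ (Fin d), Sparse (2 * s) v →
      ‖v - Mv Aᵀ (Mv A v)‖ ≤ Real.sqrt δ * ‖v‖ := by
    intro v hv
    have hinner : ⟪v, Mv Aᵀ (Mv A v)⟫ = ‖Mv A v‖ ^ 2 := by
      rw [real_inner_comm, Mv_adj]
      exact real_inner_self_eq_norm_sq _
    have hsq : ‖v - Mv Aᵀ (Mv A v)‖ ^ 2 ≤ δ * ‖v‖ ^ 2 := by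
      have hn := norm_sub_sq_real v (Mv Aᵀ (Mv A v))
      rw [hinner] at hn
      have h3 : ‖Mv Aᵀ (Mv A v)‖ ≤ ‖Mv A v‖ := hATle _
      have h4 := (hRIP v hv).1
      set p : ℝ := ‖Mv A v‖ with hp
      set q : ℝ := ‖Mv Aᵀ (Mv A v)‖ with hq
      have hq0 : 0 ≤ q := norm_nonneg _
      have hp0 : 0 ≤ p := norm_nonneg _
      have h6 : q ^ 2 ≤ p ^ 2 := by nlinarith
      nlinarith
    calc ‖v - Mv Aᵀ (Mv A v)‖
        = Real.sqrt (‖v - Mv Aᵀ (Mv A v)‖ ^ 2) := (Real.sqrt_sq (norm_nonneg _)).symm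
      _ ≤ Real.sqrt (δ * ‖v‖ ^ 2) := Real.sqrt_le_sqrt hsq
      _ = Real.sqrt δ * ‖v‖ := by
          rw [Real.sqrt_mul hδ0, Real.sqrt_sq (norm_nonneg _)]
  -- I - 2η A*A is a contraction
  have hI : ∀ w : EuclideanSpace ℝ (Fin d), ‖w - (2 * η) • Mv Aᵀ (Mv A w)‖ ≤ ‖w‖ := by
    intro w
    have hinner : ⟪w, (2 * η) • Mv Aᵀ (Mv A w)⟫ = (2 * η) * ‖Mv A w‖ ^ 2 := by
      rw [real_inner_smul_right, real_inner_comm, Mv_adj, real_inner_self_eq_norm_sq]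
    have hsq : ‖w - (2 * η) • Mv Aᵀ (Mv A w)‖ ^ 2 ≤ ‖w‖ ^ 2 := by
      have hn := norm_sub_sq_real w ((2 * η) • Mv Aᵀ (Mv A w))
      rw [hinner, norm_smul] at hn
      have h5 : ‖(2 * η : ℝ)‖ = 2 * η := by
        rw [Real.norm_eq_abs, abs_of_nonneg (by linarith)]
      rw [h5] at hn
      have h3 : ‖Mv Aᵀ (Mv A w)‖ ≤ ‖Mv A w‖ := hATle _
      set p : ℝ := ‖Mv A w‖ with hp
      set q : ℝ := ‖Mv Aᵀ (Mv A w)‖ with hq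
      have hq0 : 0 ≤ q := norm_nonneg _
      have hp0 : 0 ≤ p := norm_nonneg _
      have h6 : q ^ 2 ≤ p ^ 2 := by nlinarith
      have hηs : η ^ 2 ≤ η := by nlinarith
      have h8 : 4 * η ^ 2 * p ^ 2 ≤ 4 * η * p ^ 2 := by
        nlinarith [mul_le_mul_of_nonneg_right hηs (sq_nonneg p)]
      nlinarith [mul_le_mul_of_nonneg_left h6 (show (0:ℝ) ≤ 4 * η ^ 2 by positivity)]
    calc ‖w - (2 * η) • Mv Aᵀ (Mv A w)‖
        = Real.sqrt (‖w - (2 * η) • Mv Aᵀ (Mv A w)‖ ^ 2) := (Real.sqrt_sq (norm_nonneg _)).symm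
      _ ≤ Real.sqrt (‖w‖ ^ 2) := Real.sqrt_le_sqrt hsq
      _ = ‖w‖ := Real.sqrt_sq (norm_nonneg _)
  -- x t is s-sparse
  have hxsp : ∀ t : ℕ, Sparse s (x t) := by
    intro t
    cases t with
    | zero =>
      rw [hx0]
      simp [Sparse]
    | succ t =>
      obtain ⟨Ω, hΩc, hΩx, _⟩ := hstep t
      rw [hΩx]
      have hsub : {i | proj Ω (a (t + 1)) i ≠ 0} ⊆ (Ω : Set (Fin d)) := by
        intro i hi
        simp only [Set.mem_setOf_eq, proj] at hi
        by_contra hc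
        rw [if_neg (fun h => hc (Finset.mem_coe.mpr h))] at hi
        exact hi rfl
      simp only [Sparse]
      calc Set.ncard {i | proj Ω (a (t + 1)) i ≠ 0}
          ≤ Set.ncard (Ω : Set (Fin d)) := Set.ncard_le_ncard hsub (Set.toFinite _)
        _ = Ω.card := Set.ncard_coe_finset Ω
        _ = s := hΩc
  -- construct Ωs ⊇ supp xs with card s
  have hsd : s ≤ d := by
    obtain ⟨Ω, hΩc, _, _⟩ := hstep 0
    have := Finset.card_le_univ Ω
    simpa [hΩc] using this
  classical
  set T : Finset (Fin d) := Finset.univ.filter (fun i => xs i ≠ 0) with hT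
  have hTcard : T.card ≤ s := by
    have h1 : (T : Set (Fin d)) = {i | xs i ≠ 0} := by ext i; simp [hT]
    have h2 := Set.ncard_coe_finset T
    rw [h1] at h2
    simp only [Sparse] at hxs
    omega
  obtain ⟨Ωs, hTΩs, _, hΩscard⟩ :=
    Finset.exists_subsuperset_card_eq (Finset.subset_univ T) hTcard
      (by simpa using hsd)
  have hxs_zero : ∀ i : Fin d, i ∉ Ωs → xs i = 0 := by
    intro i hi
    by_contra hc
    exact hi (hTΩs (by simp [hT, hc]))
  have hproj_xs : proj Ωs xs = xs := by
    ext i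
    by_cases h : i ∈ Ωs
    · simp [proj, h]
    · simp [proj, h, hxs_zero i h]
  -- main per-step contraction
  have hMain : ∀ t : ℕ, ‖x (t + 1) - xs‖ ≤ ρ * ‖x t - xs‖ := by
    intro t
    set e : EuclideanSpace ℝ (Fin d) := x t - xs with he
    set u : EuclideanSpace ℝ (Fin d) := a (t + 1) - xs with hu
    have he_sp : Sparse (2 * s) e := sparse_sub (hxsp t) hxs
    -- u = e - A*Ae
    have hu_eq : u = e - Mv Aᵀ (Mv A e) := by
      rw [hu, ha t, hy]
      have h1 : Mv A xs - Mv A (x t) = Mv A (xs - x t) := (map_sub (Matrix.toEuclideanLin A) _ _).symm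
      have h2 : (xs - x t) = -e := by rw [he]; abel
      have h3 : Mv A (-e) = -(Mv A e) := map_neg (Matrix.toEuclideanLin A) _
      have h4 : Mv Aᵀ (-(Mv A e)) = -(Mv Aᵀ (Mv A e)) := map_neg (Matrix.toEuclideanLin Aᵀ) _
      rw [h1, h2, h3, h4, he]
      abel
    have hu_norm : ‖u‖ ≤ Real.sqrt δ * ‖e‖ := by
      rw [hu_eq]; exact hKeySp e he_sp
    have ha_eq : a (t + 1) = xs + u := by rw [hu]; abel
    -- identify the look-ahead point
    set b : EuclideanSpace ℝ (Fin d) := a (t + 1) - (2 * η) • Mv Aᵀ (Mv A u) with hb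
    have hb_eq : a (t + 1) - η • ((-2 : ℝ) • Mv Aᵀ (y - Mv A (a (t + 1)))) = b := by
      rw [hb, hy, ha_eq]
      have h1 : Mv A xs - Mv A (xs + u) = -(Mv A u) := by
        rw [show Mv A (xs + u) = Mv A xs + Mv A u from map_add (Matrix.toEuclideanLin A) _ _]
        abel
      rw [h1, show Mv Aᵀ (-(Mv A u)) = -(Mv Aᵀ (Mv A u)) from map_neg (Matrix.toEuclideanLin Aᵀ) _]
      rw [smul_neg, smul_neg, smul_smul]
      rw [show η * (-2 : ℝ) = -(2 * η) by ring]
      rw [neg_smul, neg_neg]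
    have hb_xs : b - xs = u - (2 * η) • Mv Aᵀ (Mv A u) := by
      rw [hb, hu]; abel
    have hbx_norm : ‖b - xs‖ ≤ ‖u‖ := by rw [hb_xs]; exact hI u
    -- optimality
    obtain ⟨Ω, hΩc, hΩx, hopt⟩ := hstep t
    have h1 : ‖x (t + 1) - b‖ ≤ ‖proj Ωs (a (t + 1)) - b‖ := by
      have := hopt Ωs hΩscard
      rwa [hb_eq] at this
    -- decompose proj Ωs (a (t+1)) - b
    set w : EuclideanSpace ℝ (Fin d) := (2 * η) • Mv Aᵀ (Mv A u) with hw
    set v₁ : EuclideanSpace ℝ (Fin d) := proj Ωsᶜ (w - u) with hv₁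
    set v₂ : EuclideanSpace ℝ (Fin d) := proj Ωs w with hv₂
    have hdecomp : proj Ωs (a (t + 1)) - b = v₁ + v₂ := by
      ext i
      have hadd : (v₁ + v₂) i = v₁ i + v₂ i := rfl
      have hsub1 : (proj Ωs (a (t + 1)) - b) i = proj Ωs (a (t + 1)) i - b i := rfl
      have hbi : b i = a (t + 1) i - w i := rfl
      have hui : u i = a (t + 1) i - xs i := rfl
      have hwu : (w - u) i = w i - u i := rfl
      rw [hadd, hsub1, hbi]
      by_cases h : i ∈ Ωs
      · simp only [hv₁, hv₂, proj, PiLp.toLp_apply, Finset.mem_compl, h, if_pos, not_true_eq_false, if_false,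
          if_neg (by simp [h] : ¬ i ∈ Ωsᶜ)]
        simp [h]
      · have hxsi : xs i = 0 := hxs_zero i h
        simp only [hv₁, hv₂, proj, PiLp.toLp_apply, if_neg h,
          if_pos (Finset.mem_compl.mpr h), hwu, hui, hxsi]
        ring
    have hd : ∀ i, v₁ i * v₂ i = 0 := by
      intro i
      by_cases h : i ∈ Ωs
      · have : v₁ i = 0 := by simp [hv₁, proj, Finset.mem_compl, h]
        rw [this, zero_mul]
      · have : v₂ i = 0 := by simp [hv₂, proj, h]
        rw [this, mul_zero]
    have hv₁n : ‖v₁‖ ≤ ‖u‖ := by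
      calc ‖v₁‖ ≤ ‖w - u‖ := proj_norm_le _ _
        _ = ‖u - w‖ := by rw [← norm_neg]; congr 1; abel
        _ ≤ ‖u‖ := hI u
    have hv₂n : ‖v₂‖ ≤ 2 * η * ‖u‖ := by
      calc ‖v₂‖ ≤ ‖w‖ := proj_norm_le _ _
        _ = (2 * η) * ‖Mv Aᵀ (Mv A u)‖ := by
            rw [hw, norm_smul, Real.norm_eq_abs, abs_of_nonneg (by linarith)]
        _ ≤ (2 * η) * ‖u‖ := by
            have := le_trans (hATle (Mv A u)) (hAle u)
            exact mul_le_mul_of_nonneg_left this (by linarith)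
    have hproj_b : ‖proj Ωs (a (t + 1)) - b‖ ≤ Real.sqrt (1 + 4 * η ^ 2) * ‖u‖ := by
      have hp := pyth v₁ v₂ hd
      rw [← hdecomp] at hp
      have hle : ‖proj Ωs (a (t + 1)) - b‖ ^ 2 ≤ (1 + 4 * η ^ 2) * ‖u‖ ^ 2 := by
        rw [hp]
        have h1 : ‖v₁‖ ^ 2 ≤ ‖u‖ ^ 2 := by
          nlinarith [norm_nonneg v₁, norm_nonneg u]
        have h2 : ‖v₂‖ ^ 2 ≤ 4 * η ^ 2 * ‖u‖ ^ 2 := by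
          nlinarith [norm_nonneg v₂, mul_nonneg (by linarith : (0:ℝ) ≤ 2 * η) (norm_nonneg u)]
        nlinarith
      calc ‖proj Ωs (a (t + 1)) - b‖
          = Real.sqrt (‖proj Ωs (a (t + 1)) - b‖ ^ 2) := (Real.sqrt_sq (norm_nonneg _)).symm
        _ ≤ Real.sqrt ((1 + 4 * η ^ 2) * ‖u‖ ^ 2) := Real.sqrt_le_sqrt hle
        _ = Real.sqrt (1 + 4 * η ^ 2) * ‖u‖ := by
            rw [Real.sqrt_mul (by nlinarith [sq_nonneg η]), Real.sqrt_sq (norm_nonneg _)]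
    -- put it together
    calc ‖x (t + 1) - xs‖
        = ‖(x (t + 1) - b) + (b - xs)‖ := by congr 1; abel
      _ ≤ ‖x (t + 1) - b‖ + ‖b - xs‖ := norm_add_le _ _
      _ ≤ ‖proj Ωs (a (t + 1)) - b‖ + ‖u‖ := add_le_add h1 hbx_norm
      _ ≤ Real.sqrt (1 + 4 * η ^ 2) * ‖u‖ + ‖u‖ := by linarith [hproj_b]
      _ = K * ‖u‖ := by rw [hK]; ring
      _ ≤ K * (Real.sqrt δ * ‖e‖) := mul_le_mul_of_nonneg_left hu_norm hKpos.le
      _ = ρ * ‖e‖ := by rw [hρ]; ring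
  -- conclude
  have hBound : ∀ t : ℕ, ‖x t - xs‖ ≤ ρ ^ t * ‖x 0 - xs‖ := by
    intro t
    induction t with
    | zero => simp
    | succ t ih =>
      calc ‖x (t + 1) - xs‖ ≤ ρ * ‖x t - xs‖ := hMain t
        _ ≤ ρ * (ρ ^ t * ‖x 0 - xs‖) := mul_le_mul_of_nonneg_left ih hρ0
        _ = ρ ^ (t + 1) * ‖x 0 - xs‖ := by ring
  refine ⟨hρ1, hBound, ?_⟩
  rw [tendsto_iff_norm_sub_tendsto_zero]
  have hlim : Tendsto (fun t : ℕ => ρ ^ t * ‖x 0 - xs‖) atTop (nhds 0) := by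
    have := (tendsto_pow_atTop_nhds_zero_of_lt_one hρ0 hρ1).mul_const ‖x 0 - xs‖
    simpa using this
  exact squeeze_zero (fun t => norm_nonneg _) hBound hlim
end

section
/- Let A be an m×d matrix with ‖A‖_op = 1, x* ∈ ℝ^d arbitrary, y = Ax* + e, and 0 ≤ η ≤ 1. Write H_s(x*) for a best s-term approximation of x* and ẽ = y − A H_s(x*). Let a ∈ ℝ^d, C(x) = ‖y − Ax‖₂², ℓ_η = a − η∇C(a), and let x' be the s-sparse coordinate projection of a closest to ℓ_η. Then ‖x' − H_s(x*)‖₂ ≤ (2 + 2η)‖a − H_s(x*)‖₂ + 6η‖ẽ‖₂. -/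
open Matrix MeasureTheory ProbabilityTheory Filter
open scoped RealInnerProductSpace NNReal

lemma mv_bound {m d : ℕ} (A : Matrix (Fin m) (Fin d) ℝ) (hA : opNorm A = 1)
    (v : EuclideanSpace ℝ (Fin d)) : ‖Mv A v‖ ≤ ‖v‖ := by
  have h := (LinearMap.toContinuousLinearMap (Matrix.toEuclideanLin A)).le_opNorm v
  unfold opNorm at hA
  simpa [Mv, hA] using h

lemma mv_adj_inner {m d : ℕ} (A : Matrix (Fin m) (Fin d) ℝ)
    (v : EuclideanSpace ℝ (Fin d)) (w : EuclideanSpace ℝ (Fin m)) :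
    ⟪v, Mv Aᵀ w⟫ = ⟪Mv A v, w⟫ := by
  have h1 : (Aᵀ) = Aᴴ := (Matrix.conjTranspose_eq_transpose_of_trivial A).symm
  rw [Mv, Mv, h1, Matrix.toEuclideanLin_conjTranspose_eq_adjoint,
    real_inner_comm, LinearMap.adjoint_inner_left]
  exact real_inner_comm _ _

lemma mv_adj_bound {m d : ℕ} (A : Matrix (Fin m) (Fin d) ℝ) (hA : opNorm A = 1)
    (w : EuclideanSpace ℝ (Fin m)) : ‖Mv Aᵀ w‖ ≤ ‖w‖ := by
  set u := Mv Aᵀ w with hu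
  have h1 : ‖u‖ ^ 2 = ⟪u, Mv Aᵀ w⟫ := by rw [← hu, real_inner_self_eq_norm_sq]
  rw [mv_adj_inner] at h1
  have h2 : ⟪Mv A u, w⟫ ≤ ‖Mv A u‖ * ‖w‖ := real_inner_le_norm _ _
  have h3 : ‖Mv A u‖ ≤ ‖u‖ := mv_bound A hA u
  nlinarith [norm_nonneg u, norm_nonneg w, norm_nonneg (Mv A u)]

lemma mv_contract {m d : ℕ} (A : Matrix (Fin m) (Fin d) ℝ) (hA : opNorm A = 1)
    {η : ℝ} (hη0 : 0 ≤ η) (hη1 : η ≤ 1) (v : EuclideanSpace ℝ (Fin d)) :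
    ‖v - (2 * η) • Mv Aᵀ (Mv A v)‖ ≤ ‖v‖ := by
  set w := Mv Aᵀ (Mv A v) with hw
  have hsq : ‖v - (2 * η) • w‖ ^ 2 = ‖v‖ ^ 2 - 2 * ⟪v, (2 * η) • w⟫ + ‖(2 * η) • w‖ ^ 2 :=
    norm_sub_sq_real v _
  have hin : ⟪v, (2 * η) • w⟫ = (2 * η) * ‖Mv A v‖ ^ 2 := by
    rw [real_inner_smul_right, hw, mv_adj_inner, real_inner_self_eq_norm_sq]
  have hns : ‖(2 * η) • w‖ = (2 * η) * ‖w‖ := by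
    rw [norm_smul, Real.norm_eq_abs, abs_of_nonneg (by linarith)]
  have h3 : ‖w‖ ≤ ‖Mv A v‖ := mv_adj_bound A hA _
  have h4 : ‖Mv A v‖ ≤ ‖v‖ := mv_bound A hA v
  have key : ‖v - (2 * η) • w‖ ^ 2 ≤ ‖v‖ ^ 2 := by
    rw [hsq, hin, hns]
    have hww : ‖w‖ ^ 2 ≤ ‖Mv A v‖ ^ 2 := by nlinarith [norm_nonneg w, norm_nonneg (Mv A v)]
    have h5 : η * ‖w‖ ^ 2 ≤ ‖Mv A v‖ ^ 2 := by nlinarith [sq_nonneg ‖w‖]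
    have h6 := mul_le_mul_of_nonneg_left h5 (by linarith : (0:ℝ) ≤ 4 * η)
    nlinarith
  nlinarith [norm_nonneg (v - (2 * η) • w), norm_nonneg v]

set_option maxHeartbeats 1000000 in
theorem stmt9 {m d s : ℕ} (A : Matrix (Fin m) (Fin d) ℝ) (hA : opNorm A = 1)
    (xs : EuclideanSpace ℝ (Fin d)) (e : EuclideanSpace ℝ (Fin m))
    (y : EuclideanSpace ℝ (Fin m)) (hy : y = Mv A xs + e)
    (η : ℝ) (hη0 : 0 ≤ η) (hη1 : η ≤ 1)
    (h : EuclideanSpace ℝ (Fin d)) (hh : Sparse s h)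
    (hbest : ∀ w : EuclideanSpace ℝ (Fin d), Sparse s w → ‖xs - h‖ ≤ ‖xs - w‖)
    (et : EuclideanSpace ℝ (Fin m)) (het : et = y - Mv A h)
    (a : EuclideanSpace ℝ (Fin d)) (ℓ : EuclideanSpace ℝ (Fin d))
    (hℓ : ℓ = a - η • ((-2 : ℝ) • Mv Aᵀ (y - Mv A a)))
    (Ω : Finset (Fin d)) (hΩ : Ω.card = s)
    (x' : EuclideanSpace ℝ (Fin d)) (hx' : x' = proj Ω a)
    (hmin : ∀ Ω' : Finset (Fin d), Ω'.card = s → ‖x' - ℓ‖ ≤ ‖proj Ω' a - ℓ‖) :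
    ‖x' - h‖ ≤ (2 + 2 * η) * ‖a - h‖ + 6 * η * ‖et‖ := by
  -- rewrite the residual
  have hyA : y - Mv A a = Mv A (h - a) + et := by
    rw [het]
    have : Mv A (h - a) = Mv A h - Mv A a := by simp [Mv, map_sub]
    rw [this]; abel
  have key : Mv Aᵀ (y - Mv A a) = -(Mv Aᵀ (Mv A (a - h))) + Mv Aᵀ et := by
    rw [hyA, show h - a = -(a - h) by abel]
    simp [Mv, map_add, map_neg]
  -- bound on ℓ - a
  have hℓa : ℓ - a = (2 * η) • (Mv Aᵀ (Mv A (h - a) + et)) := by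
    rw [hℓ, hyA, smul_smul]
    have hc : η * (-2:ℝ) = -(2 * η) := by ring
    rw [hc, neg_smul, sub_neg_eq_add]
    abel
  have hbound1 : ‖ℓ - a‖ ≤ 2 * η * (‖a - h‖ + ‖et‖) := by
    rw [hℓa, norm_smul, Real.norm_eq_abs, abs_of_nonneg (by linarith)]
    have h1 : ‖Mv Aᵀ (Mv A (h - a) + et)‖ ≤ ‖Mv A (h - a) + et‖ := mv_adj_bound A hA _
    have h2 : ‖Mv A (h - a) + et‖ ≤ ‖Mv A (h - a)‖ + ‖et‖ := norm_add_le _ _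
    have h3 : ‖Mv A (h - a)‖ ≤ ‖h - a‖ := mv_bound A hA _
    have h4 : ‖h - a‖ = ‖a - h‖ := norm_sub_rev _ _
    nlinarith
  -- bound on ℓ - h
  have hℓh : ℓ - h = ((a - h) - (2 * η) • Mv Aᵀ (Mv A (a - h))) + (2 * η) • Mv Aᵀ et := by
    rw [hℓ, key, smul_smul]
    have hc : η * (-2:ℝ) = -(2 * η) := by ring
    rw [hc, neg_smul, sub_neg_eq_add, smul_add, smul_neg]
    abel
  have hbound2 : ‖ℓ - h‖ ≤ ‖a - h‖ + 2 * η * ‖et‖ := by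
    rw [hℓh]
    have h1 := norm_add_le ((a - h) - (2 * η) • Mv Aᵀ (Mv A (a - h))) ((2 * η) • Mv Aᵀ et)
    have h2 : ‖(a - h) - (2 * η) • Mv Aᵀ (Mv A (a - h))‖ ≤ ‖a - h‖ :=
      mv_contract A hA hη0 hη1 _
    have h3 : ‖(2 * η) • Mv Aᵀ et‖ ≤ 2 * η * ‖et‖ := by
      rw [norm_smul, Real.norm_eq_abs, abs_of_nonneg (by linarith)]
      have := mv_adj_bound A hA et
      nlinarith
    linarith
  -- a superset of the support of h of cardinality s
  classical
  set S : Finset (Fin d) := Finset.univ.filter (fun i => h i ≠ 0) with hS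
  have hScard : S.card ≤ s := by
    have he : {i | h i ≠ 0} = (↑S : Set (Fin d)) := by ext i; simp [hS]
    have := hh
    unfold Sparse at this
    rwa [he, Set.ncard_coe_finset] at this
  have hsd : s ≤ Fintype.card (Fin d) := hΩ ▸ Finset.card_le_univ Ω
  obtain ⟨Ω₀, hsub, hΩ₀⟩ := Finset.exists_superset_card_eq hScard hsd
  -- best coordinate approximation bound
  have hproj : ‖proj Ω₀ a - a‖ ≤ ‖a - h‖ := by
    rw [EuclideanSpace.norm_eq, EuclideanSpace.norm_eq]
    apply Real.sqrt_le_sqrt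
    apply Finset.sum_le_sum
    intro i _
    by_cases hi : i ∈ Ω₀
    · have : (proj Ω₀ a - a) i = 0 := by simp [proj, hi]
      rw [this]
      simpa using sq_nonneg ‖(a - h) i‖
    · have hhi : h i = 0 := by
        by_contra hne
        exact hi (hsub (by simp [hS, hne]))
      have e1 : (proj Ω₀ a - a) i = -(a i) := by simp [proj, hi]
      have e2 : (a - h) i = a i := by simp [hhi]
      rw [e1, e2, norm_neg]
  -- combine
  have t1 : ‖x' - ℓ‖ ≤ ‖proj Ω₀ a - ℓ‖ := hmin Ω₀ hΩ₀
  have t2 : ‖proj Ω₀ a - ℓ‖ ≤ ‖proj Ω₀ a - a‖ + ‖a - ℓ‖ := norm_sub_le_norm_sub_add_norm_sub _ _ _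
  have t3 : ‖x' - h‖ ≤ ‖x' - ℓ‖ + ‖ℓ - h‖ := norm_sub_le_norm_sub_add_norm_sub _ _ _
  have t4 : ‖a - ℓ‖ = ‖ℓ - a‖ := norm_sub_rev _ _
  have t5 : 0 ≤ η * ‖et‖ := mul_nonneg hη0 (norm_nonneg _)
  nlinarith [norm_nonneg (a - h)]
end

section
/- Let A be an m×d random matrix with entries i.i.d. N(0, 1/m), and η > 0. Then E[‖I − 2ηA*A‖_F²] = 4d[((d+m+1)/m)η² − η + 1/4]. -/
open Matrix MeasureTheory ProbabilityTheory Filter Real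
open scoped RealInnerProductSpace NNReal ENNReal

set_option linter.unusedSectionVars false
set_option linter.unusedVariables false
set_option maxHeartbeats 1000000
section



lemma integrable_pow_mul_exp_neg {b : ℝ} (hb : 0 < b) (n : ℕ) :
    Integrable (fun x : ℝ => x ^ n * Real.exp (-b * x ^ 2)) := by
  have h2 : (0:ℝ) < b/2 := by linarith
  have hg : Integrable (fun x : ℝ =>
      ((n.factorial : ℝ) * Real.exp b⁻¹) * Real.exp (-(b/2) * x ^ 2)) :=
    (integrable_exp_neg_mul_sq h2).const_mul _
  refine hg.mono' ?_ ?_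
  · exact ((continuous_pow n).mul (by continuity)).aestronglyMeasurable
  · refine Filter.Eventually.of_forall fun x => ?_
    have h1 : |x| ^ n ≤ (n.factorial : ℝ) * Real.exp |x| := by
      have h := Real.pow_div_factorial_le_exp |x| (abs_nonneg x) n
      have hfac : (0:ℝ) < n.factorial := by positivity
      rw [div_le_iff₀ hfac] at h
      nlinarith [Real.exp_pos |x|]
    have h3 : Real.exp |x| * Real.exp (-b * x ^ 2)
        ≤ Real.exp b⁻¹ * Real.exp (-(b/2) * x ^ 2) := by
      rw [← Real.exp_add, ← Real.exp_add]
      apply Real.exp_le_exp.2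
      have h2b : (0:ℝ) < 2*b := by linarith
      have hx2 : 2*b*|x| ≤ b^2*x^2 + 1 := by nlinarith [sq_nonneg (b*|x| - 1), sq_abs x]
      have e1 : (b^2*x^2+1)/(2*b) = (b/2)*x^2 + (2*b)⁻¹ := by field_simp
      have e2 : |x| ≤ (b^2*x^2+1)/(2*b) := by rw [le_div_iff₀ h2b]; nlinarith
      have e3 : (2*b)⁻¹ ≤ b⁻¹ := by apply inv_anti₀ hb; linarith
      rw [e1] at e2
      linarith
    calc ‖x ^ n * Real.exp (-b * x ^ 2)‖
        = |x| ^ n * Real.exp (-b * x ^ 2) := by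
          rw [norm_mul, norm_pow, Real.norm_eq_abs, Real.norm_eq_abs,
            abs_of_pos (Real.exp_pos _)]
      _ ≤ ((n.factorial : ℝ) * Real.exp |x|) * Real.exp (-b * x ^ 2) := by
          apply mul_le_mul_of_nonneg_right h1 (Real.exp_pos _).le
      _ = (n.factorial : ℝ) * (Real.exp |x| * Real.exp (-b * x ^ 2)) := by ring
      _ ≤ (n.factorial : ℝ) * (Real.exp b⁻¹ * Real.exp (-(b/2) * x ^ 2)) := by
          apply mul_le_mul_of_nonneg_left h3 (by positivity)
      _ = ((n.factorial : ℝ) * Real.exp b⁻¹) * Real.exp (-(b/2) * x ^ 2) := by ring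




lemma hasDerivAt_exp_neg_sq (b x : ℝ) :
    HasDerivAt (fun x : ℝ => Real.exp (-b * x ^ 2)) (Real.exp (-b * x ^ 2) * (-b * (2 * x))) x := by
  have h1 : HasDerivAt (fun x : ℝ => -b * x ^ 2) (-b * (2 * x)) x := by
    simpa using (hasDerivAt_pow 2 x).const_mul (-b)
  exact h1.exp

lemma integral_x_exp_neg {b : ℝ} (hb : 0 < b) :
    ∫ x : ℝ, x * Real.exp (-b * x ^ 2) = 0 := by
  have hd : ∀ x : ℝ, HasDerivAt (fun x : ℝ => (-(2*b)⁻¹) * Real.exp (-b * x ^ 2))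
      (x * Real.exp (-b * x ^ 2)) x := by
    intro x
    have := (hasDerivAt_exp_neg_sq b x).const_mul (-(2*b)⁻¹)
    refine this.congr_deriv ?_
    field_simp
  exact integral_eq_zero_of_hasDerivAt_of_integrable hd
    (by simpa using integrable_pow_mul_exp_neg hb 1)
    ((integrable_exp_neg_mul_sq hb).const_mul _)

lemma integral_x2_exp_neg {b : ℝ} (hb : 0 < b) :
    ∫ x : ℝ, x ^ 2 * Real.exp (-b * x ^ 2) = Real.sqrt (π / b) / (2 * b) := by
  have hd : ∀ x : ℝ, HasDerivAt (fun x : ℝ => x * Real.exp (-b * x ^ 2))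
      (Real.exp (-b * x ^ 2) - 2 * b * (x ^ 2 * Real.exp (-b * x ^ 2))) x := by
    intro x
    have := (hasDerivAt_id x).mul (hasDerivAt_exp_neg_sq b x)
    refine this.congr_deriv ?_
    simp only [id_eq]
    ring
  have h0 : ∫ x : ℝ, (Real.exp (-b * x ^ 2) - 2 * b * (x ^ 2 * Real.exp (-b * x ^ 2))) = 0 :=
    integral_eq_zero_of_hasDerivAt_of_integrable hd
      ((integrable_exp_neg_mul_sq hb).sub ((integrable_pow_mul_exp_neg hb 2).const_mul _))
      (by simpa using integrable_pow_mul_exp_neg hb 1)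
  rw [integral_sub (integrable_exp_neg_mul_sq hb)
    ((integrable_pow_mul_exp_neg hb 2).const_mul _), integral_const_mul,
    integral_gaussian] at h0
  have hb' : (2:ℝ) * b ≠ 0 := by positivity
  field_simp at h0 ⊢
  linarith

lemma integral_x4_exp_neg {b : ℝ} (hb : 0 < b) :
    ∫ x : ℝ, x ^ 4 * Real.exp (-b * x ^ 2) = 3 * Real.sqrt (π / b) / (4 * b ^ 2) := by
  have hd : ∀ x : ℝ, HasDerivAt (fun x : ℝ => x ^ 3 * Real.exp (-b * x ^ 2))
      (3 * (x ^ 2 * Real.exp (-b * x ^ 2)) - 2 * b * (x ^ 4 * Real.exp (-b * x ^ 2))) x := by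
    intro x
    have := (hasDerivAt_pow 3 x).mul (hasDerivAt_exp_neg_sq b x)
    refine this.congr_deriv ?_
    norm_num
    ring
  have h0 : ∫ x : ℝ, (3 * (x ^ 2 * Real.exp (-b * x ^ 2)) - 2 * b * (x ^ 4 * Real.exp (-b * x ^ 2))) = 0 :=
    integral_eq_zero_of_hasDerivAt_of_integrable hd
      (((integrable_pow_mul_exp_neg hb 2).const_mul _).sub
        ((integrable_pow_mul_exp_neg hb 4).const_mul _))
      (by simpa using integrable_pow_mul_exp_neg hb 3)
  rw [integral_sub ((integrable_pow_mul_exp_neg hb 2).const_mul _)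
    ((integrable_pow_mul_exp_neg hb 4).const_mul _), integral_const_mul, integral_const_mul,
    integral_x2_exp_neg hb] at h0
  have hb' : (2:ℝ) * b ≠ 0 := by positivity
  field_simp at h0 ⊢
  linarith





variable {v : ℝ≥0}

lemma pdf_eq (hv : v ≠ 0) (x : ℝ) :
    gaussianPDFReal 0 v x = (Real.sqrt (2*π*v))⁻¹ * Real.exp (-((2*(v:ℝ))⁻¹) * x^2) := by
  have hv' : (0:ℝ) < v := by positivity
  rw [gaussianPDFReal]
  congr 1
  rw [sub_zero]
  congr 1
  field_simp

lemma gaussianReal_integral_eq (hv : v ≠ 0) (g : ℝ → ℝ) :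
    ∫ x, g x ∂(gaussianReal 0 v) = ∫ x, gaussianPDFReal 0 v x * g x := by
  rw [gaussianReal_of_var_ne_zero _ hv]
  have hm : Measurable fun x => (gaussianPDFReal 0 v x).toNNReal :=
    (measurable_gaussianPDFReal 0 v).real_toNNReal
  have he : (volume.withDensity (gaussianPDF 0 v)) =
      volume.withDensity (fun x => ((gaussianPDFReal 0 v x).toNNReal : ℝ≥0∞)) := rfl
  rw [he, integral_withDensity_eq_integral_smul hm]
  congr 1; ext x
  rw [NNReal.smul_def, smul_eq_mul, Real.coe_toNNReal _ (gaussianPDFReal_nonneg 0 v x)]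

lemma gaussianReal_integrable_pow (hv : v ≠ 0) (n : ℕ) :
    Integrable (fun x : ℝ => x ^ n) (gaussianReal 0 v) := by
  have hv' : (0:ℝ) < v := by positivity
  have hb : (0:ℝ) < (2*(v:ℝ))⁻¹ := by positivity
  rw [gaussianReal_of_var_ne_zero _ hv]
  have hm : Measurable fun x => (gaussianPDFReal 0 v x).toNNReal :=
    (measurable_gaussianPDFReal 0 v).real_toNNReal
  have he : (volume.withDensity (gaussianPDF 0 v)) =
      volume.withDensity (fun x => ((gaussianPDFReal 0 v x).toNNReal : ℝ≥0∞)) := rfl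
  rw [he, integrable_withDensity_iff_integrable_smul hm]
  have : (fun x : ℝ => (gaussianPDFReal 0 v x).toNNReal • x ^ n)
      = fun x : ℝ => (Real.sqrt (2*π*v))⁻¹ * (x ^ n * Real.exp (-((2*(v:ℝ))⁻¹) * x^2)) := by
    ext x
    rw [NNReal.smul_def, smul_eq_mul, Real.coe_toNNReal _ (gaussianPDFReal_nonneg 0 v x),
      pdf_eq hv]
    ring
  rw [this]
  exact (integrable_pow_mul_exp_neg hb n).const_mul _

lemma gaussianReal_moment (hv : v ≠ 0) (n : ℕ) :
    ∫ x, x ^ n ∂(gaussianReal 0 v)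
      = (Real.sqrt (2*π*v))⁻¹ * ∫ x, x ^ n * Real.exp (-((2*(v:ℝ))⁻¹) * x^2) := by
  rw [gaussianReal_integral_eq hv, ← integral_const_mul]
  congr 1; ext x
  rw [pdf_eq hv]
  ring

lemma gaussianReal_moment_one (hv : v ≠ 0) :
    ∫ x, x ∂(gaussianReal 0 v) = 0 := by
  have hb : (0:ℝ) < (2*(v:ℝ))⁻¹ := by positivity
  have := gaussianReal_moment hv 1
  simp only [pow_one] at this
  rw [this, integral_x_exp_neg hb, mul_zero]

lemma sqrt_piv (hv : v ≠ 0) : Real.sqrt (π / ((2*(v:ℝ))⁻¹)) = Real.sqrt (2*π*v) := by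
  congr 1
  have hv' : (0:ℝ) < v := by positivity
  field_simp

lemma gaussianReal_moment_two (hv : v ≠ 0) :
    ∫ x, x ^ 2 ∂(gaussianReal 0 v) = (v : ℝ) := by
  have hv' : (0:ℝ) < v := by positivity
  have hb : (0:ℝ) < (2*(v:ℝ))⁻¹ := by positivity
  have hs : (0:ℝ) < Real.sqrt (2*π*v) := Real.sqrt_pos.mpr (by positivity)
  rw [gaussianReal_moment hv 2, integral_x2_exp_neg hb, sqrt_piv hv]
  field_simp

lemma gaussianReal_moment_four (hv : v ≠ 0) :
    ∫ x, x ^ 4 ∂(gaussianReal 0 v) = 3 * (v : ℝ) ^ 2 := by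
  have hv' : (0:ℝ) < v := by positivity
  have hb : (0:ℝ) < (2*(v:ℝ))⁻¹ := by positivity
  have hs : (0:ℝ) < Real.sqrt (2*π*v) := Real.sqrt_pos.mpr (by positivity)
  rw [gaussianReal_moment hv 4, integral_x4_exp_neg hb, sqrt_piv hv]
  field_simp
  ring





lemma iIndepFun_ae_eq {Ω ι : Type*} [MeasurableSpace Ω] {μ : Measure Ω} {β : ι → Type*}
    {mβ : ∀ i, MeasurableSpace (β i)} {f g : ∀ i, Ω → β i}
    (h : iIndepFun f μ) (hfg : ∀ i, f i =ᵐ[μ] g i) : iIndepFun g μ := by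
  rw [iIndepFun_iff_measure_inter_preimage_eq_mul] at h ⊢
  intro S sets H
  have h1 : ∀ i ∈ S, μ (g i ⁻¹' sets i) = μ (f i ⁻¹' sets i) := by
    intro i _
    apply measure_congr
    rw [Filter.eventuallyEq_set]
    filter_upwards [hfg i] with ω hω
    simp [hω]
  have h2 : μ (⋂ i ∈ S, g i ⁻¹' sets i) = μ (⋂ i ∈ S, f i ⁻¹' sets i) := by
    apply measure_congr
    have hall : ∀ᵐ ω ∂μ, ∀ i ∈ S, f i ω = g i ω :=
      (Filter.eventually_all_finset S).2 fun i _ => hfg i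
    rw [Filter.eventuallyEq_set]
    filter_upwards [hall] with ω hω
    simp only [Set.mem_iInter, Set.mem_preimage]
    constructor
    · intro hx i hi; rw [hω i hi]; exact hx i hi
    · intro hx i hi; rw [← hω i hi]; exact hx i hi
  rw [h2, h S H]
  exact (Finset.prod_congr rfl h1).symm

lemma sum_ite_diag (n : ℕ) (a c : ℝ) :
    ∑ k : Fin n, ∑ l : Fin n, (if k = l then a else c)
      = n * a + ((n : ℝ) ^ 2 - n) * c := by
  have h : ∀ k : Fin n, ∑ l : Fin n, (if k = l then a else c) = a + ((n : ℝ) - 1) * c := by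
    intro k
    have : ∀ l : Fin n, (if k = l then a else c) = (if k = l then a - c else 0) + c := by
      intro l; by_cases h : k = l <;> simp [h]
    simp_rw [this, Finset.sum_add_distrib, Finset.sum_ite_eq, Finset.sum_const]
    simp [Finset.mem_univ k, mul_comm]
    ring
  simp_rw [h, Finset.sum_const, Finset.card_univ, Fintype.card_fin, nsmul_eq_mul]
  ring

section transfer
variable {Ω : Type*} [MeasurableSpace Ω] {μ : Measure Ω} [IsProbabilityMeasure μ] {v : ℝ≥0}

lemma map_moment {X : Ω → ℝ} (hX : AEMeasurable X μ)
    (hd : Measure.map X μ = gaussianReal 0 v) (n : ℕ) :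
    ∫ ω, X ω ^ n ∂μ = ∫ x, x ^ n ∂(gaussianReal 0 v) := by
  rw [← hd]
  exact (integral_map hX (measurable_id.pow_const n).aestronglyMeasurable).symm

lemma map_integrable_pow {X : Ω → ℝ} (hv : v ≠ 0) (hX : AEMeasurable X μ)
    (hd : Measure.map X μ = gaussianReal 0 v) (n : ℕ) :
    Integrable (fun ω => X ω ^ n) μ := by
  have h := gaussianReal_integrable_pow hv n
  rw [← hd] at h
  exact (integrable_map_measure (measurable_id.pow_const n).aestronglyMeasurable hX).mp h

end transfer





section indexed

variable {Ω : Type*} [MeasurableSpace Ω] {μ : Measure Ω} [IsProbabilityMeasure μ]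
  {ι : Type*} [DecidableEq ι] {Y : ι → Ω → ℝ} {v : ℝ≥0}

lemma moment_one (hv : v ≠ 0) (hYd : ∀ p, Measure.map (Y p) μ = gaussianReal 0 v)
    (hYm : ∀ p, Measurable (Y p)) (p : ι) : ∫ ω, Y p ω ∂μ = 0 := by
  have h := map_moment (hYm p).aemeasurable (hYd p) 1
  simp only [pow_one] at h
  rw [h, gaussianReal_moment_one hv]

lemma moment_two (hv : v ≠ 0) (hYd : ∀ p, Measure.map (Y p) μ = gaussianReal 0 v)
    (hYm : ∀ p, Measurable (Y p)) (p : ι) : ∫ ω, Y p ω ^ 2 ∂μ = (v : ℝ) := by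
  rw [map_moment (hYm p).aemeasurable (hYd p) 2, gaussianReal_moment_two hv]

lemma moment_four (hv : v ≠ 0) (hYd : ∀ p, Measure.map (Y p) μ = gaussianReal 0 v)
    (hYm : ∀ p, Measurable (Y p)) (p : ι) : ∫ ω, Y p ω ^ 4 ∂μ = 3 * (v : ℝ) ^ 2 := by
  rw [map_moment (hYm p).aemeasurable (hYd p) 4, gaussianReal_moment_four hv]

lemma pair_integrable (hv : v ≠ 0) (hYm : ∀ p, Measurable (Y p))
    (hYd : ∀ p, Measure.map (Y p) μ = gaussianReal 0 v)
    (hind : iIndepFun Y μ) (p q : ι) :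
    Integrable (fun ω => Y p ω * Y q ω) μ := by
  by_cases hpq : p = q
  · subst hpq
    have h := map_integrable_pow hv (hYm p).aemeasurable (hYd p) 2
    exact h.congr (Eventually.of_forall fun ω => (pow_two _))
  · exact (hind.indepFun hpq).integrable_mul
      (by simpa using map_integrable_pow hv (hYm p).aemeasurable (hYd p) 1)
      (by simpa using map_integrable_pow hv (hYm q).aemeasurable (hYd q) 1)

lemma pair_integral (hv : v ≠ 0) (hYm : ∀ p, Measurable (Y p))
    (hYd : ∀ p, Measure.map (Y p) μ = gaussianReal 0 v)
    (hind : iIndepFun Y μ) (p q : ι) :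
    ∫ ω, Y p ω * Y q ω ∂μ = if p = q then (v : ℝ) else 0 := by
  by_cases hpq : p = q
  · subst hpq
    rw [if_pos rfl, ← moment_two hv hYd hYm p]
    exact integral_congr_ae (Eventually.of_forall fun ω => (pow_two _).symm)
  · rw [if_neg hpq]
    have h := (hind.indepFun hpq).integral_fun_mul_eq_mul_integral (hYm p).aestronglyMeasurable
      (hYm q).aestronglyMeasurable
    rw [h, moment_one hv hYd hYm p, zero_mul]

lemma sq_integrable (hv : v ≠ 0) (hYm : ∀ p, Measurable (Y p))
    (hYd : ∀ p, Measure.map (Y p) μ = gaussianReal 0 v)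
    (hind : iIndepFun Y μ) (p q : ι) :
    Integrable (fun ω => Y p ω ^ 2 * Y q ω ^ 2) μ := by
  by_cases hpq : p = q
  · subst hpq
    exact (map_integrable_pow hv (hYm p).aemeasurable (hYd p) 4).congr
      (Eventually.of_forall fun ω => by ring)
  · have hsq : Measurable fun x : ℝ => x ^ 2 := by fun_prop
    exact ((hind.indepFun hpq).comp hsq hsq).integrable_mul
      (map_integrable_pow hv (hYm p).aemeasurable (hYd p) 2)
      (map_integrable_pow hv (hYm q).aemeasurable (hYd q) 2)

lemma sq_integral (hv : v ≠ 0) (hYm : ∀ p, Measurable (Y p))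
    (hYd : ∀ p, Measure.map (Y p) μ = gaussianReal 0 v)
    (hind : iIndepFun Y μ) {p q : ι}
    (hpq : p ≠ q) :
    ∫ ω, Y p ω ^ 2 * Y q ω ^ 2 ∂μ = (v : ℝ) ^ 2 := by
  have hsq : Measurable fun x : ℝ => x ^ 2 := by fun_prop
  have h := ((hind.indepFun hpq).comp hsq hsq).integral_fun_mul_eq_mul_integral
    ((hYm p).pow_const 2).aestronglyMeasurable ((hYm q).pow_const 2).aestronglyMeasurable
  rw [show (∫ ω, Y p ω ^ 2 * Y q ω ^ 2 ∂μ)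
      = ∫ ω, ((fun x : ℝ => x ^ 2) ∘ Y p) ω * ((fun x : ℝ => x ^ 2) ∘ Y q) ω ∂μ from rfl, h,
    show integral μ ((fun x : ℝ => x ^ 2) ∘ Y p) = ∫ ω, Y p ω ^ 2 ∂μ from rfl,
    show integral μ ((fun x : ℝ => x ^ 2) ∘ Y q) = ∫ ω, Y q ω ^ 2 ∂μ from rfl,
    moment_two hv hYd hYm p, moment_two hv hYd hYm q, sq]

lemma quad_integral (hv : v ≠ 0) (hYm : ∀ p, Measurable (Y p))
    (hYd : ∀ p, Measure.map (Y p) μ = gaussianReal 0 v)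
    (hind : iIndepFun Y μ) {p q r s : ι}
    (hpq : p ≠ q) (hpr : p ≠ r) (hps : p ≠ s) (hqr : q ≠ r) (hqs : q ≠ s) :
    ∫ ω, (Y p ω * Y q ω) * (Y r ω * Y s ω) ∂μ = 0 := by
  have h := (hind.indepFun_mul_mul hYm p q r s hpr hps hqr hqs).integral_fun_mul_eq_mul_integral
    ((hYm p).mul (hYm q)).aestronglyMeasurable ((hYm r).mul (hYm s)).aestronglyMeasurable
  rw [show (∫ ω, (Y p ω * Y q ω) * (Y r ω * Y s ω) ∂μ)
      = ∫ ω, (Y p * Y q) ω * (Y r * Y s) ω ∂μ from rfl, h]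
  have h2 : integral μ (Y p * Y q) = 0 := by
    rw [show integral μ (Y p * Y q) = ∫ ω, Y p ω * Y q ω ∂μ from rfl,
      pair_integral hv hYm hYd hind p q, if_neg hpq]
  rw [h2, zero_mul]

end indexed





theorem stmt15 {m d : ℕ} (hm : 0 < m) {Ω : Type*} [MeasurableSpace Ω] (μ : Measure Ω)
    [IsProbabilityMeasure μ] (A : Ω → Matrix (Fin m) (Fin d) ℝ)
    (hdist : ∀ (i : Fin m) (j : Fin d),
      Measure.map (fun ω => A ω i j) μ = gaussianReal 0 ((m : ℝ≥0))⁻¹)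
    (hindep : iIndepFun
      (fun (p : Fin m × Fin d) ω => A ω p.1 p.2) μ)
    (η : ℝ) (hη : 0 < η) :
    (∫ ω, ∑ i, ∑ j,
        (((1 : Matrix (Fin d) (Fin d) ℝ) - (2 * η) • ((A ω)ᵀ * A ω)) i j) ^ 2 ∂μ) =
      4 * d * ((d + m + 1 : ℝ) / m * η ^ 2 - η + 1 / 4) := by
  classical
  set v : ℝ≥0 := (m : ℝ≥0)⁻¹ with hvdef
  have hv : v ≠ 0 := inv_ne_zero (Nat.cast_ne_zero.mpr hm.ne')
  have hmr : (0:ℝ) < m := by exact_mod_cast hm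
  have hvr : ((v : ℝ)) = (m : ℝ)⁻¹ := by simp [hvdef]
  -- measurable representatives
  have hae : ∀ p : Fin m × Fin d, AEMeasurable (fun ω => A ω p.1 p.2) μ := by
    intro p
    by_contra h
    have h0 := Measure.map_of_not_aemeasurable h
    rw [hdist p.1 p.2] at h0
    exact (IsProbabilityMeasure.ne_zero (gaussianReal 0 v)) h0
  set Y : (Fin m × Fin d) → Ω → ℝ := fun p => (hae p).mk _ with hYdef
  have hYm : ∀ p, Measurable (Y p) := fun p => (hae p).measurable_mk
  have hYe : ∀ p, (fun ω => A ω p.1 p.2) =ᵐ[μ] Y p := fun p => (hae p).ae_eq_mk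
  have hYd : ∀ p, Measure.map (Y p) μ = gaussianReal 0 v := by
    intro p
    rw [← Measure.map_congr (hYe p)]
    exact hdist p.1 p.2
  have hYind : iIndepFun Y μ :=
    iIndepFun_ae_eq hindep hYe
  -- replace integrand
  have hFG : (fun ω => ∑ i, ∑ j,
        (((1 : Matrix (Fin d) (Fin d) ℝ) - (2 * η) • ((A ω)ᵀ * A ω)) i j) ^ 2) =ᵐ[μ]
      (fun ω => ∑ i, ∑ j,
        ((if i = j then (1:ℝ) else 0) - 2 * η * ∑ k, Y (k,i) ω * Y (k,j) ω) ^ 2) := by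
    have hall : ∀ᵐ ω ∂μ, ∀ p : Fin m × Fin d, A ω p.1 p.2 = Y p ω := ae_all_iff.2 hYe
    filter_upwards [hall] with ω hω
    refine Finset.sum_congr rfl fun i _ => Finset.sum_congr rfl fun j _ => ?_
    congr 1
    simp only [Matrix.sub_apply, Matrix.one_apply, Matrix.smul_apply, smul_eq_mul,
      Matrix.mul_apply, Matrix.transpose_apply]
    have hsum : ∀ k : Fin m, A ω k i * A ω k j = Y (k,i) ω * Y (k,j) ω := by
      intro k
      have h1 : A ω k i = Y (k,i) ω := hω (k,i)
      have h2 : A ω k j = Y (k,j) ω := hω (k,j)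
      rw [h1, h2]
    rw [Finset.sum_congr rfl fun k _ => hsum k]
  rw [integral_congr_ae hFG]
  -- per-term expectations
  have Eterm : ∀ (i j : Fin d) (k l : Fin m),
      ∫ ω, (Y (k,i) ω * Y (k,j) ω) * (Y (l,i) ω * Y (l,j) ω) ∂μ
        = (if i = j then (if k = l then 3*(v:ℝ)^2 else (v:ℝ)^2)
            else (if k = l then (v:ℝ)^2 else 0)) := by
    intro i j k l
    by_cases hij : i = j
    · subst hij
      by_cases hkl : k = l
      · subst hkl
        rw [if_pos rfl, if_pos rfl,
          integral_congr_ae (Eventually.of_forall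
            (fun ω => show (Y (k,i) ω * Y (k,i) ω) * (Y (k,i) ω * Y (k,i) ω)
              = Y (k,i) ω ^ 4 by ring))]
        exact moment_four hv hYd hYm (k,i)
      · have hne : ((k,i) : Fin m × Fin d) ≠ (l,i) := by simp [Prod.ext_iff, hkl]
        rw [if_pos rfl, if_neg hkl,
          integral_congr_ae (Eventually.of_forall
            (fun ω => show (Y (k,i) ω * Y (k,i) ω) * (Y (l,i) ω * Y (l,i) ω)
              = Y (k,i) ω ^ 2 * Y (l,i) ω ^ 2 by ring))]
        exact sq_integral hv hYm hYd hYind hne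
    · by_cases hkl : k = l
      · subst hkl
        have hne : ((k,i) : Fin m × Fin d) ≠ (k,j) := by simp [Prod.ext_iff, hij]
        rw [if_neg hij, if_pos rfl,
          integral_congr_ae (Eventually.of_forall
            (fun ω => show (Y (k,i) ω * Y (k,j) ω) * (Y (k,i) ω * Y (k,j) ω)
              = Y (k,i) ω ^ 2 * Y (k,j) ω ^ 2 by ring))]
        exact sq_integral hv hYm hYd hYind hne
      · rw [if_neg hij, if_neg hkl]
        exact quad_integral hv hYm hYd hYind
          (by simp [Prod.ext_iff, hij]) (by simp [Prod.ext_iff, hkl])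
          (by simp [Prod.ext_iff, hkl]) (by simp [Prod.ext_iff, hkl])
          (by simp [Prod.ext_iff, hkl])
  have Iterm : ∀ (i j : Fin d) (k l : Fin m),
      Integrable (fun ω => (Y (k,i) ω * Y (k,j) ω) * (Y (l,i) ω * Y (l,j) ω)) μ := by
    intro i j k l
    by_cases hkl : k = l
    · subst hkl
      exact (sq_integrable hv hYm hYd hYind (k,i) (k,j)).congr
        (Eventually.of_forall fun ω => by ring)
    · exact (hYind.indepFun_mul_mul hYm (k,i) (k,j) (l,i) (l,j)
          (by simp [Prod.ext_iff, hkl]) (by simp [Prod.ext_iff, hkl])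
          (by simp [Prod.ext_iff, hkl]) (by simp [Prod.ext_iff, hkl])).integrable_mul
        (pair_integrable hv hYm hYd hYind (k,i) (k,j))
        (pair_integrable hv hYm hYd hYind (l,i) (l,j))
  -- B-level facts
  have hIB : ∀ (i j : Fin d), Integrable (fun ω => ∑ k, Y (k,i) ω * Y (k,j) ω) μ :=
    fun i j => integrable_finset_sum _ fun k _ => pair_integrable hv hYm hYd hYind (k,i) (k,j)
  have hEB : ∀ (i j : Fin d), ∫ ω, ∑ k, Y (k,i) ω * Y (k,j) ω ∂μ
      = if i = j then (m:ℝ)*(v:ℝ) else 0 := by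
    intro i j
    rw [integral_finset_sum _ fun k _ => pair_integrable hv hYm hYd hYind (k,i) (k,j)]
    have h1 : ∀ k : Fin m, (∫ ω, Y (k,i) ω * Y (k,j) ω ∂μ) = if i = j then (v:ℝ) else 0 := by
      intro k
      rw [pair_integral hv hYm hYd hYind (k,i) (k,j)]
      by_cases hij : i = j
      · simp [hij]
      · simp [hij, Prod.ext_iff]
    simp_rw [h1]
    by_cases hij : i = j <;> simp [hij, Finset.sum_const, nsmul_eq_mul]
  have hBsq : ∀ (i j : Fin d), (fun ω => (∑ k, Y (k,i) ω * Y (k,j) ω) ^ 2)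
      = fun ω => ∑ k, ∑ l, (Y (k,i) ω * Y (k,j) ω) * (Y (l,i) ω * Y (l,j) ω) := by
    intro i j
    funext ω
    rw [sq, Finset.sum_mul_sum]
  have hIB2 : ∀ (i j : Fin d), Integrable (fun ω => (∑ k, Y (k,i) ω * Y (k,j) ω) ^ 2) μ := by
    intro i j
    rw [hBsq i j]
    exact integrable_finset_sum _ fun k _ => integrable_finset_sum _ fun l _ => Iterm i j k l
  have hEB2 : ∀ (i j : Fin d), ∫ ω, (∑ k, Y (k,i) ω * Y (k,j) ω) ^ 2 ∂μ
      = if i = j then ((m:ℝ)^2 + 2*m)*(v:ℝ)^2 else (m:ℝ)*(v:ℝ)^2 := by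
    intro i j
    rw [show (∫ ω, (∑ k, Y (k,i) ω * Y (k,j) ω) ^ 2 ∂μ)
        = ∫ ω, ∑ k, ∑ l, (Y (k,i) ω * Y (k,j) ω) * (Y (l,i) ω * Y (l,j) ω) ∂μ by rw [← hBsq i j],
      integral_finset_sum _ fun k _ => integrable_finset_sum _ fun l _ => Iterm i j k l]
    have : ∀ k : Fin m, (∫ ω, ∑ l, (Y (k,i) ω * Y (k,j) ω) * (Y (l,i) ω * Y (l,j) ω) ∂μ)
        = ∑ l, ∫ ω, (Y (k,i) ω * Y (k,j) ω) * (Y (l,i) ω * Y (l,j) ω) ∂μ :=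
      fun k => integral_finset_sum _ fun l _ => Iterm i j k l
    simp_rw [this, Eterm i j]
    by_cases hij : i = j
    · rw [if_pos hij]
      simp only [if_pos hij]
      rw [sum_ite_diag]
      ring
    · rw [if_neg hij]
      simp only [if_neg hij]
      rw [sum_ite_diag]
      ring
  -- entry-level
  have IEntry : ∀ (i j : Fin d), Integrable
      (fun ω => ((if i = j then (1:ℝ) else 0) - 2 * η * ∑ k, Y (k,i) ω * Y (k,j) ω) ^ 2) μ := by
    intro i j
    have expand : (fun ω => ((if i = j then (1:ℝ) else 0)
          - 2 * η * ∑ k, Y (k,i) ω * Y (k,j) ω) ^ 2)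
        = fun ω => (((if i = j then (1:ℝ) else 0) ^ 2
            - (4 * η * (if i = j then (1:ℝ) else 0)) * ∑ k, Y (k,i) ω * Y (k,j) ω)
          + (4 * η ^ 2) * (∑ k, Y (k,i) ω * Y (k,j) ω) ^ 2) := funext fun ω => by ring
    rw [expand]
    exact ((integrable_const _).sub ((hIB i j).const_mul _)).add ((hIB2 i j).const_mul _)
  have EEntry : ∀ (i j : Fin d),
      ∫ ω, ((if i = j then (1:ℝ) else 0) - 2 * η * ∑ k, Y (k,i) ω * Y (k,j) ω) ^ 2 ∂μ
        = if i = j then (1 - 4*η*((m:ℝ)*(v:ℝ)) + 4*η^2*(((m:ℝ)^2 + 2*m)*(v:ℝ)^2))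
            else 4*η^2*((m:ℝ)*(v:ℝ)^2) := by
    intro i j
    have expand : (fun ω => ((if i = j then (1:ℝ) else 0)
          - 2 * η * ∑ k, Y (k,i) ω * Y (k,j) ω) ^ 2)
        = fun ω => (((if i = j then (1:ℝ) else 0) ^ 2
            - (4 * η * (if i = j then (1:ℝ) else 0)) * ∑ k, Y (k,i) ω * Y (k,j) ω)
          + (4 * η ^ 2) * (∑ k, Y (k,i) ω * Y (k,j) ω) ^ 2) := funext fun ω => by ring
    have I0 : Integrable (fun _ : Ω => (if i = j then (1:ℝ) else 0) ^ 2) μ := integrable_const _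
    have I1 : Integrable (fun ω =>
        (4 * η * (if i = j then (1:ℝ) else 0)) * ∑ k, Y (k,i) ω * Y (k,j) ω) μ :=
      (hIB i j).const_mul _
    have I01 : Integrable (fun ω => (if i = j then (1:ℝ) else 0) ^ 2
        - (4 * η * (if i = j then (1:ℝ) else 0)) * ∑ k, Y (k,i) ω * Y (k,j) ω) μ := I0.sub I1
    have I2 : Integrable (fun ω => (4 * η ^ 2) * (∑ k, Y (k,i) ω * Y (k,j) ω) ^ 2) μ :=
      (hIB2 i j).const_mul _
    rw [show (∫ ω, ((if i = j then (1:ℝ) else 0)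
          - 2 * η * ∑ k, Y (k,i) ω * Y (k,j) ω) ^ 2 ∂μ)
        = ∫ ω, (((if i = j then (1:ℝ) else 0) ^ 2
            - (4 * η * (if i = j then (1:ℝ) else 0)) * ∑ k, Y (k,i) ω * Y (k,j) ω)
          + (4 * η ^ 2) * (∑ k, Y (k,i) ω * Y (k,j) ω) ^ 2) ∂μ by rw [← expand],
      integral_add I01 I2, integral_sub I0 I1,
      integral_const_mul, integral_const_mul, hEB i j, hEB2 i j, integral_const]
    simp only [measure_univ, ENNReal.toReal_one, smul_eq_mul, one_mul]
    by_cases hij : i = j <;> simp [hij] <;> ring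
  -- assemble
  rw [integral_finset_sum _ fun i _ => integrable_finset_sum _ fun j _ => IEntry i j]
  have step2 : ∑ i : Fin d, (∫ ω, ∑ j,
        ((if i = j then (1:ℝ) else 0) - 2 * η * ∑ k, Y (k,i) ω * Y (k,j) ω) ^ 2 ∂μ)
      = ∑ i : Fin d, ∑ j : Fin d,
          (if i = j then (1 - 4*η*((m:ℝ)*(v:ℝ)) + 4*η^2*(((m:ℝ)^2 + 2*m)*(v:ℝ)^2))
            else 4*η^2*((m:ℝ)*(v:ℝ)^2)) := by
    refine Finset.sum_congr rfl fun i _ => ?_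
    rw [integral_finset_sum _ fun j _ => IEntry i j]
    exact Finset.sum_congr rfl fun j _ => EEntry i j
  rw [step2, sum_ite_diag, hvr]
  field_simp
  ring

end
end
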